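/- arXiv:2103.02490 — 4 statements merged into one kernel-verified Lean document; each statement's English description precedes it below -/
import Mathlib

section
/- Fix a prime p. Let Λ be a ℤ_p-lattice in ℚ_p², and let Λ' := Λ \ p·Λ be its set of primitive vectors. Then Λ' is a compact open subset of X, and there exist finitely many pairwise disjoint compact open subsets U₁, …, U_t of X whose union is X₀, and integers m₁, …, m_t, such that Λ' is the disjoint union of the sets p^{m₁}·U₁, …, p^{m_t}·U_t. -/
/-- `X := (ℚ_p × ℚ_p) \ {(0,0)}`. -/
def X (p : ℕ) [Fact p.Prime] : Set (ℚ_[p] × ℚ_[p]) := {v | v ≠ 0}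

/-- The set `X₀` of primitive vectors of `ℤ_p²`. -/
def X0 (p : ℕ) [Fact p.Prime] : Set (ℚ_[p] × ℚ_[p]) :=
  {v | ‖v.1‖ ≤ 1 ∧ ‖v.2‖ ≤ 1 ∧ (‖v.1‖ = 1 ∨ ‖v.2‖ = 1)}

/-- `p^j·U := {(p^j x, p^j y) : (x, y) ∈ U}`. -/
def pScale (p : ℕ) [Fact p.Prime] (j : ℤ) (U : Set (ℚ_[p] × ℚ_[p])) : Set (ℚ_[p] × ℚ_[p]) :=
  (fun v => ((p : ℚ_[p]) ^ j * v.1, (p : ℚ_[p]) ^ j * v.2)) '' U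

/-- A `ℤ_p`-lattice in `ℚ_p²`: the `ℤ_p`-submodule `ℤ_p·v + ℤ_p·w` for some
`ℚ_p`-basis `(v, w)` of `ℚ_p × ℚ_p` (viewed as a set; `ℤ_p ⊆ ℚ_p` is the set of
elements of norm at most 1). -/
def IsLattice (p : ℕ) [Fact p.Prime] (Λ : Set (ℚ_[p] × ℚ_[p])) : Prop :=
  ∃ b : Module.Basis (Fin 2) ℚ_[p] (ℚ_[p] × ℚ_[p]),
    Λ = {z | ∃ a c : ℚ_[p], ‖a‖ ≤ 1 ∧ ‖c‖ ≤ 1 ∧ z = a • b 0 + c • b 1}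

section helpers

variable (p : ℕ) [hp : Fact p.Prime]

/-- auxiliary: the sup-norm on `ℚ_p × ℚ_p`. -/
noncomputable def psiAux (z : ℚ_[p] × ℚ_[p]) : ℝ := max ‖z.1‖ ‖z.2‖

lemma psiAux_cont : Continuous (psiAux p) :=
  (continuous_fst.norm).max (continuous_snd.norm)

lemma psiAux_nonneg (z : ℚ_[p] × ℚ_[p]) : 0 ≤ psiAux p z :=
  le_trans (norm_nonneg _) (le_max_left _ _)

lemma psiAux_eq_zero_iff (z : ℚ_[p] × ℚ_[p]) : psiAux p z = 0 ↔ z = 0 := by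
  constructor
  · intro h
    have h1 : ‖z.1‖ ≤ 0 := h ▸ le_max_left _ _
    have h2 : ‖z.2‖ ≤ 0 := h ▸ le_max_right _ _
    have : z.1 = 0 := norm_le_zero_iff.mp h1
    have : z.2 = 0 := norm_le_zero_iff.mp h2
    exact Prod.ext ‹z.1 = 0› ‹z.2 = 0›
  · rintro rfl; simp [psiAux]

lemma psiAux_dichotomy (z : ℚ_[p] × ℚ_[p]) :
    psiAux p z = 0 ∨ ∃ k : ℤ, psiAux p z = (p : ℝ) ^ k := by
  rcases le_total ‖z.1‖ ‖z.2‖ with h | h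
  · rcases eq_or_ne z.2 0 with h2 | h2
    · left
      have : z.1 = 0 := by
        apply norm_le_zero_iff.mp; simpa [h2] using h
      simp [psiAux, this, h2]
    · right
      exact ⟨-z.2.valuation, by rw [psiAux, max_eq_right h, Padic.norm_eq_zpow_neg_valuation h2]⟩
  · rcases eq_or_ne z.1 0 with h1 | h1
    · left
      have : z.2 = 0 := by
        apply norm_le_zero_iff.mp; simpa [h1] using h
      simp [psiAux, this, h1]
    · right
      exact ⟨-z.1.valuation, by rw [psiAux, max_eq_left h, Padic.norm_eq_zpow_neg_valuation h1]⟩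

lemma psiAux_mul (c : ℚ_[p]) (z : ℚ_[p] × ℚ_[p]) :
    psiAux p (c * z.1, c * z.2) = ‖c‖ * psiAux p z := by
  simp only [psiAux, norm_mul]
  exact (mul_max_of_nonneg _ _ (norm_nonneg c)).symm

lemma mem_X0_iff (z : ℚ_[p] × ℚ_[p]) : z ∈ X0 p ↔ psiAux p z = 1 := by
  constructor
  · rintro ⟨h1, h2, h3⟩
    refine le_antisymm (max_le h1 h2) ?_
    rcases h3 with h | h
    · exact le_trans (le_of_eq h.symm) (le_max_left _ _)
    · exact le_trans (le_of_eq h.symm) (le_max_right _ _)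
  · intro h
    have h1 : ‖z.1‖ ≤ 1 := h ▸ le_max_left _ _
    have h2 : ‖z.2‖ ≤ 1 := h ▸ le_max_right _ _
    refine ⟨h1, h2, ?_⟩
    rcases le_total ‖z.1‖ ‖z.2‖ with hle | hle
    · right; rw [psiAux, max_eq_right hle] at h; exact h
    · left; rw [psiAux, max_eq_left hle] at h; exact h

lemma one_lt_pR : (1 : ℝ) < p := by exact_mod_cast hp.out.one_lt

lemma between_pow {j k : ℤ} (h1 : (p : ℝ) ^ (k - 1) < (p : ℝ) ^ j)
    (h2 : (p : ℝ) ^ j < (p : ℝ) ^ (k + 1)) : j = k := by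
  have hp1 := one_lt_pR p
  rw [zpow_lt_zpow_iff_right₀ hp1] at h1 h2
  omega

lemma zero_not_mem_X0 : (0 : ℚ_[p] × ℚ_[p]) ∉ X0 p := by
  rw [mem_X0_iff]
  rw [(psiAux_eq_zero_iff p 0).mpr rfl]
  norm_num

lemma X0_subset_X : X0 p ⊆ X p := by
  intro z hz
  intro h0
  exact zero_not_mem_X0 p (h0 ▸ hz)

lemma isClosed_X0 : IsClosed (X0 p) := by
  have : X0 p = psiAux p ⁻¹' {1} := Set.ext fun z => mem_X0_iff p z
  rw [this]
  exact IsClosed.preimage (psiAux_cont p) isClosed_singleton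

lemma isOpen_X0 : IsOpen (X0 p) := by
  have hp1 := one_lt_pR p
  have hset : X0 p = psiAux p ⁻¹' (Set.Ioo ((p : ℝ))⁻¹ p) := by
    ext z
    rw [mem_X0_iff, Set.mem_preimage, Set.mem_Ioo]
    constructor
    · intro h
      rw [h]
      exact ⟨inv_lt_one_of_one_lt₀ hp1, hp1⟩
    · rintro ⟨ha, hb⟩
      rcases psiAux_dichotomy p z with h0 | ⟨k, hk⟩
      · rw [h0] at ha; exact absurd ha (not_lt.mpr (by positivity))
      · rw [hk] at ha hb ⊢
        have : k = 0 := by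
          refine between_pow p ?_ ?_
          · rw [zero_sub, zpow_neg, zpow_one]; exact ha
          · rw [zero_add, zpow_one]; exact hb
        rw [this, zpow_zero]
  rw [hset]
  exact (psiAux_cont p).isOpen_preimage _ isOpen_Ioo

lemma isCompact_X0 : IsCompact (X0 p) := by
  apply Metric.isCompact_of_isClosed_isBounded (isClosed_X0 p)
  apply Bornology.IsBounded.subset (Metric.isBounded_closedBall (x := (0 : ℚ_[p] × ℚ_[p])) (r := 1))
  rintro z ⟨h1, h2, -⟩
  rw [Metric.mem_closedBall, dist_zero_right, Prod.norm_def]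
  exact max_le h1 h2

lemma norm_le_inv_iff (x : ℚ_[p]) : ‖x‖ ≤ (p : ℝ)⁻¹ ↔ ‖x‖ < 1 := by
  have h := Padic.norm_le_pow_iff_norm_lt_pow_add_one x (-1)
  rw [neg_add_cancel, zpow_zero] at h
  rw [← h, zpow_neg, zpow_one]

lemma mem_pScale_iff (j : ℤ) (U : Set (ℚ_[p] × ℚ_[p])) (w : ℚ_[p] × ℚ_[p]) :
    w ∈ pScale p j U ↔ ((p : ℚ_[p]) ^ (-j) * w.1, (p : ℚ_[p]) ^ (-j) * w.2) ∈ U := by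
  have hp0 : (p : ℚ_[p]) ≠ 0 := Nat.cast_ne_zero.mpr hp.out.ne_zero
  have c1 : ∀ x : ℚ_[p], (p : ℚ_[p]) ^ (-j) * ((p : ℚ_[p]) ^ j * x) = x := by
    intro x
    rw [← mul_assoc, ← zpow_add₀ hp0, neg_add_cancel, zpow_zero, one_mul]
  have c2 : ∀ x : ℚ_[p], (p : ℚ_[p]) ^ j * ((p : ℚ_[p]) ^ (-j) * x) = x := by
    intro x
    rw [← mul_assoc, ← zpow_add₀ hp0, add_neg_cancel, zpow_zero, one_mul]
  constructor
  · rintro ⟨u, hu, rfl⟩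
    show ((p : ℚ_[p]) ^ (-j) * ((p : ℚ_[p]) ^ j * u.1), (p : ℚ_[p]) ^ (-j) * ((p : ℚ_[p]) ^ j * u.2)) ∈ U
    rw [c1, c1]; exact hu
  · intro h
    exact ⟨_, h, Prod.ext (c2 _) (c2 _)⟩

end helpers

/-- If `Λ` is a `ℤ_p`-lattice in `ℚ_p²` and `Λ' := Λ \ pΛ` is its set of primitive
vectors, then `Λ'` is a compact open subset of `X`, and there are finitely many
pairwise disjoint compact open `U₁, …, U_t ⊆ X` with union `X₀` and integers
`m₁, …, m_t` such that `Λ'` is the disjoint union of `p^{m₁}·U₁, …, p^{m_t}·U_t`. -/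
theorem stmt1 (p : ℕ) [Fact p.Prime] (Λ : Set (ℚ_[p] × ℚ_[p])) (hΛ : IsLattice p Λ) :
    IsCompact (Λ \ pScale p 1 Λ) ∧ IsOpen (Λ \ pScale p 1 Λ) ∧ (Λ \ pScale p 1 Λ) ⊆ X p ∧
    ∃ (t : ℕ) (U : Fin t → Set (ℚ_[p] × ℚ_[p])) (m : Fin t → ℤ),
      (∀ i, IsCompact (U i) ∧ IsOpen (U i) ∧ U i ⊆ X p) ∧
      (Pairwise fun i k => Disjoint (U i) (U k)) ∧
      (⋃ i, U i) = X0 p ∧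
      (Pairwise fun i k => Disjoint (pScale p (m i) (U i)) (pScale p (m k) (U k))) ∧
      (Λ \ pScale p 1 Λ) = ⋃ i, pScale p (m i) (U i) := by
  obtain ⟨b, hΛeq⟩ := hΛ
  have hp1 : (1 : ℝ) < p := one_lt_pR p
  have hppos : (0 : ℝ) < p := lt_trans one_pos hp1
  have hpR0 : (p : ℝ) ≠ 0 := ne_of_gt hppos
  have hpne1 : (p : ℝ) ≠ 1 := ne_of_gt hp1
  have hpQ0 : (p : ℚ_[p]) ≠ 0 := Nat.cast_ne_zero.mpr (Fact.out (p := p.Prime)).ne_zero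
  have hcanc : ∀ (j : ℤ) (x : ℚ_[p]), (p : ℚ_[p]) ^ (-j) * ((p : ℚ_[p]) ^ j * x) = x := by
    intro j x
    rw [← mul_assoc, ← zpow_add₀ hpQ0, neg_add_cancel, zpow_zero, one_mul]
  -- the linear equivalence sending the standard basis to `b`
  set L := (Module.Basis.finTwoProd ℚ_[p]).equiv b (Equiv.refl _) with hLdef
  have hLapply : ∀ v : ℚ_[p] × ℚ_[p], L v = v.1 • b 0 + v.2 • b 1 := by
    intro v
    have hv : v = v.1 • (Module.Basis.finTwoProd ℚ_[p]) 0 + v.2 • (Module.Basis.finTwoProd ℚ_[p]) 1 := by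
      simp [Module.Basis.finTwoProd_zero, Module.Basis.finTwoProd_one, Prod.ext_iff]
    calc L v = L (v.1 • (Module.Basis.finTwoProd ℚ_[p]) 0 + v.2 • (Module.Basis.finTwoProd ℚ_[p]) 1) := by
          rw [← hv]
      _ = v.1 • L ((Module.Basis.finTwoProd ℚ_[p]) 0) + v.2 • L ((Module.Basis.finTwoProd ℚ_[p]) 1) := by
          rw [map_add, map_smul, map_smul]
      _ = v.1 • b 0 + v.2 • b 1 := by
          rw [hLdef, Module.Basis.equiv_apply, Module.Basis.equiv_apply]; rfl
  have hnormp : ∀ j : ℤ, ‖(p : ℚ_[p]) ^ j‖ = (p : ℝ) ^ (-j) := by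
    intro j
    rw [norm_zpow, Padic.norm_p, inv_zpow, ← zpow_neg]
  have hsymm_smul : ∀ (c : ℚ_[p]) (v : ℚ_[p] × ℚ_[p]),
      L.symm (c * v.1, c * v.2) = c • L.symm v := by
    intro c v
    have hc : (c * v.1, c * v.2) = c • v := Prod.ext (by simp) (by simp)
    rw [hc, map_smul]
  have hsmul_pair : ∀ (c : ℚ_[p]) (w : ℚ_[p] × ℚ_[p]), c • w = (c * w.1, c * w.2) :=
    fun c w => Prod.ext (by simp) (by simp)
  -- the sup norm after a change of basis
  set φ : (ℚ_[p] × ℚ_[p]) → ℝ := fun v => psiAux p (L.symm v) with hφdef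
  have hψmul : ∀ (j : ℤ) (v : ℚ_[p] × ℚ_[p]),
      psiAux p ((p : ℚ_[p]) ^ j * v.1, (p : ℚ_[p]) ^ j * v.2) = (p : ℝ) ^ (-j) * psiAux p v := by
    intro j v
    rw [psiAux_mul, hnormp]
  have hφmul : ∀ (j : ℤ) (v : ℚ_[p] × ℚ_[p]),
      φ ((p : ℚ_[p]) ^ j * v.1, (p : ℚ_[p]) ^ j * v.2) = (p : ℝ) ^ (-j) * φ v := by
    intro j v
    show psiAux p (L.symm ((p : ℚ_[p]) ^ j * v.1, (p : ℚ_[p]) ^ j * v.2)) = _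
    rw [hsymm_smul, hsmul_pair, hψmul]
  -- membership in Λ and pΛ via coordinates
  have hmemΛ : ∀ v, v ∈ Λ ↔ ‖(L.symm v).1‖ ≤ 1 ∧ ‖(L.symm v).2‖ ≤ 1 := by
    intro v
    rw [hΛeq]
    constructor
    · rintro ⟨a, c, ha, hc, rfl⟩
      have h2 : L (a, c) = a • b 0 + c • b 1 := hLapply (a, c)
      rw [← h2, L.symm_apply_apply]
      exact ⟨ha, hc⟩
    · rintro ⟨h1, h2⟩
      refine ⟨(L.symm v).1, (L.symm v).2, h1, h2, ?_⟩
      have h3 := hLapply (L.symm v)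
      rw [L.apply_symm_apply] at h3
      exact h3
  have hmempΛ : ∀ v, v ∈ pScale p 1 Λ ↔
      ‖(L.symm v).1‖ ≤ (p : ℝ)⁻¹ ∧ ‖(L.symm v).2‖ ≤ (p : ℝ)⁻¹ := by
    intro v
    rw [mem_pScale_iff, hmemΛ, hsymm_smul]
    have e1 : ((p : ℚ_[p]) ^ (-(1:ℤ)) • L.symm v).1 = (p : ℚ_[p]) ^ (-(1:ℤ)) * (L.symm v).1 := by
      simp
    have e2 : ((p : ℚ_[p]) ^ (-(1:ℤ)) • L.symm v).2 = (p : ℚ_[p]) ^ (-(1:ℤ)) * (L.symm v).2 := by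
      simp
    rw [e1, e2, norm_mul, norm_mul, hnormp, neg_neg, zpow_one]
    have hiff : ∀ a : ℝ, (p : ℝ) * a ≤ 1 ↔ a ≤ (p : ℝ)⁻¹ := by
      intro a
      rw [mul_comm, ← le_div_iff₀ hppos, one_div]
    rw [hiff, hiff]
  have hmemΛ' : ∀ v, v ∈ Λ \ pScale p 1 Λ ↔ φ v = 1 := by
    intro v
    rw [Set.mem_diff, hmemΛ, hmempΛ]
    constructor
    · rintro ⟨⟨h1, h2⟩, h3⟩
      refine le_antisymm (max_le h1 h2) ?_
      by_contra hlt
      push_neg at hlt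
      exact h3 ⟨(norm_le_inv_iff p _).mpr (lt_of_le_of_lt (le_max_left _ _) hlt),
        (norm_le_inv_iff p _).mpr (lt_of_le_of_lt (le_max_right _ _) hlt)⟩
    · intro h
      have h1 : ‖(L.symm v).1‖ ≤ 1 := h ▸ le_max_left _ _
      have h2 : ‖(L.symm v).2‖ ≤ 1 := h ▸ le_max_right _ _
      refine ⟨⟨h1, h2⟩, ?_⟩
      rintro ⟨g1, g2⟩
      have hle : φ v ≤ (p : ℝ)⁻¹ := max_le g1 g2
      rw [h] at hle
      exact absurd hle (not_le.mpr (inv_lt_one_of_one_lt₀ hp1))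
  have hΛ'eq : Λ \ pScale p 1 Λ = (⇑L.symm) ⁻¹' (X0 p) :=
    Set.ext fun v => (hmemΛ' v).trans (mem_X0_iff p _).symm
  -- continuity
  have hcontsymm : Continuous (⇑L.symm) := by
    rw [← LinearEquiv.coe_toContinuousLinearEquiv_symm' L]
    exact (L.toContinuousLinearEquiv.symm).continuous
  have hcontL : Continuous (⇑L) := by
    rw [← LinearEquiv.coe_toContinuousLinearEquiv' L]
    exact L.toContinuousLinearEquiv.continuous
  have hφcont : Continuous φ := (psiAux_cont p).comp hcontsymm
  have himg : Λ \ pScale p 1 Λ = ⇑L '' X0 p := by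
    rw [hΛ'eq]
    ext v
    constructor
    · intro hv
      exact ⟨L.symm v, hv, L.apply_symm_apply v⟩
    · rintro ⟨u, hu, rfl⟩
      simpa [L.symm_apply_apply] using hu
  have hcompact : IsCompact (Λ \ pScale p 1 Λ) := by
    rw [himg]; exact (isCompact_X0 p).image hcontL
  have hopen : IsOpen (Λ \ pScale p 1 Λ) := by
    rw [hΛ'eq]; exact (isOpen_X0 p).preimage hcontsymm
  have hsubX : Λ \ pScale p 1 Λ ⊆ X p := by
    intro v hv
    rw [hΛ'eq] at hv
    intro h0
    rw [h0] at hv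
    rw [Set.mem_preimage, map_zero] at hv
    exact zero_not_mem_X0 p hv
  refine ⟨hcompact, hopen, hsubX, ?_⟩
  -- values of φ are powers of p
  have hφpow : ∀ v : ℚ_[p] × ℚ_[p], v ≠ 0 → ∃ k : ℤ, φ v = (p : ℝ) ^ k := by
    intro v hv
    rcases psiAux_dichotomy p (L.symm v) with h0 | hk
    · exfalso
      apply hv
      have hz : L.symm v = 0 := (psiAux_eq_zero_iff p _).mp h0
      have hz2 := congrArg (⇑L) hz
      rwa [L.apply_symm_apply, map_zero] at hz2
    · exact hk
  have hX0ne : (X0 p).Nonempty := by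
    refine ⟨(1, 0), (mem_X0_iff p _).mpr ?_⟩
    simp [psiAux]
  have hX0nz : ∀ v, v ∈ X0 p → v ≠ 0 := by
    intro v hv h0
    exact zero_not_mem_X0 p (h0 ▸ hv)
  obtain ⟨v₀, hv₀X, hv₀min⟩ := (isCompact_X0 p).exists_isMinOn hX0ne hφcont.continuousOn
  obtain ⟨v₁, hv₁X, hv₁max⟩ := (isCompact_X0 p).exists_isMaxOn hX0ne hφcont.continuousOn
  have hεpos : 0 < φ v₀ := by
    obtain ⟨k, hk⟩ := hφpow v₀ (hX0nz v₀ hv₀X)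
    rw [hk]; positivity
  obtain ⟨N₁, hN₁⟩ := pow_unbounded_of_one_lt (φ v₁) hp1
  obtain ⟨N₂, hN₂⟩ := pow_unbounded_of_one_lt (φ v₀)⁻¹ hp1
  set N : ℕ := max N₁ N₂ + 1 with hNdef
  have key : ∀ v ∈ X0 p, ∀ k : ℤ, φ v = (p : ℝ) ^ k → -(N : ℤ) < k ∧ k < N := by
    intro v hv k hk
    have hle : φ v ≤ φ v₁ := hv₁max hv
    have hge : φ v₀ ≤ φ v := hv₀min hv
    constructor
    · have h1 : (p : ℝ) ^ (-(N₂ : ℤ)) < φ v₀ := by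
        rw [zpow_neg, zpow_natCast]
        exact inv_lt_of_inv_lt₀ hεpos hN₂
      have h2 : (p : ℝ) ^ (-(N : ℤ)) ≤ (p : ℝ) ^ (-(N₂ : ℤ)) := by
        rw [zpow_le_zpow_iff_right₀ hp1]
        have hNN : N₂ ≤ N := le_trans (le_max_right N₁ N₂) (Nat.le_succ _)
        have hNN' : (N₂ : ℤ) ≤ (N : ℤ) := by exact_mod_cast hNN
        omega
      have h3 : (p : ℝ) ^ (-(N : ℤ)) < (p : ℝ) ^ k := by
        calc (p : ℝ) ^ (-(N : ℤ)) ≤ (p : ℝ) ^ (-(N₂ : ℤ)) := h2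
          _ < φ v₀ := h1
          _ ≤ φ v := hge
          _ = _ := hk
      rw [zpow_lt_zpow_iff_right₀ hp1] at h3
      exact h3
    · have h1 : φ v₁ < (p : ℝ) ^ ((N₁ : ℤ)) := by
        rw [zpow_natCast]; exact hN₁
      have h2 : (p : ℝ) ^ ((N₁ : ℤ)) ≤ (p : ℝ) ^ ((N : ℤ)) := by
        rw [zpow_le_zpow_iff_right₀ hp1]
        have hNN : N₁ ≤ N := le_trans (le_max_left N₁ N₂) (Nat.le_succ _)
        exact_mod_cast hNN
      have h3 : (p : ℝ) ^ k < (p : ℝ) ^ ((N : ℤ)) := by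
        calc (p : ℝ) ^ k = φ v := hk.symm
          _ ≤ φ v₁ := hle
          _ < (p : ℝ) ^ ((N₁ : ℤ)) := h1
          _ ≤ _ := h2
      rw [zpow_lt_zpow_iff_right₀ hp1] at h3
      exact h3
  refine ⟨2 * N + 1, fun i => {v | v ∈ X0 p ∧ φ v = (p : ℝ) ^ (((i : ℕ) : ℤ) - (N : ℤ))},
    fun i => ((i : ℕ) : ℤ) - (N : ℤ), ?_, ?_, ?_, ?_, ?_⟩
  · -- compact, open, ⊆ X
    intro i
    beta_reduce
    have hUeq : {v | v ∈ X0 p ∧ φ v = (p : ℝ) ^ (((i : ℕ) : ℤ) - (N : ℤ))}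
        = X0 p ∩ φ ⁻¹' {(p : ℝ) ^ (((i : ℕ) : ℤ) - (N : ℤ))} := rfl
    have hclosed : IsClosed {v | v ∈ X0 p ∧ φ v = (p : ℝ) ^ (((i : ℕ) : ℤ) - (N : ℤ))} := by
      rw [hUeq]
      exact (isClosed_X0 p).inter (IsClosed.preimage hφcont isClosed_singleton)
    refine ⟨(isCompact_X0 p).of_isClosed_subset hclosed (fun v hv => hv.1), ?_,
      fun v hv => X0_subset_X p hv.1⟩
    have hUopen : {v | v ∈ X0 p ∧ φ v = (p : ℝ) ^ (((i : ℕ) : ℤ) - (N : ℤ))}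
        = X0 p ∩ φ ⁻¹' (Set.Ioo ((p : ℝ) ^ ((((i : ℕ) : ℤ) - (N : ℤ)) - 1))
            ((p : ℝ) ^ ((((i : ℕ) : ℤ) - (N : ℤ)) + 1))) := by
      ext v
      constructor
      · rintro ⟨hvX, hvφ⟩
        refine ⟨hvX, ?_⟩
        rw [Set.mem_preimage, Set.mem_Ioo, hvφ]
        constructor
        · rw [zpow_lt_zpow_iff_right₀ hp1]; omega
        · rw [zpow_lt_zpow_iff_right₀ hp1]; omega
      · rintro ⟨hvX, hvI⟩
        refine ⟨hvX, ?_⟩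
        obtain ⟨j, hj⟩ := hφpow v (hX0nz v hvX)
        rw [Set.mem_preimage, Set.mem_Ioo, hj] at hvI
        rw [hj, between_pow p hvI.1 hvI.2]
    rw [hUopen]
    exact (isOpen_X0 p).inter (hφcont.isOpen_preimage _ isOpen_Ioo)
  · -- pairwise disjoint U
    intro i k hik
    rw [Set.disjoint_left]
    rintro v ⟨hvX, h1⟩ ⟨_, h2⟩
    have hmm : ((i : ℕ) : ℤ) - (N : ℤ) = ((k : ℕ) : ℤ) - (N : ℤ) :=
      (zpow_right_inj₀ hppos hpne1).mp (h1.symm.trans h2)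
    exact hik (Fin.ext (by omega))
  · -- union is X0
    apply Set.Subset.antisymm
    · exact Set.iUnion_subset fun i v hv => hv.1
    · intro v hv
      obtain ⟨k, hk⟩ := hφpow v (hX0nz v hv)
      obtain ⟨hk1, hk2⟩ := key v hv k hk
      have hlt : (k + (N : ℤ)).toNat < 2 * N + 1 := by omega
      refine Set.mem_iUnion.mpr ⟨⟨(k + (N : ℤ)).toNat, hlt⟩, hv, ?_⟩
      show φ v = (p : ℝ) ^ ((((k + (N : ℤ)).toNat : ℕ) : ℤ) - (N : ℤ))
      rw [hk]
      congr 1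
      omega
  · -- pairwise disjoint scaled
    intro i k hik
    rw [Set.disjoint_left]
    rintro w ⟨u, ⟨huX, huφ⟩, rfl⟩ ⟨u', ⟨hu'X, hu'φ⟩, heq⟩
    have heq' : ((p : ℚ_[p]) ^ (((k : ℕ) : ℤ) - (N : ℤ)) * u'.1,
        (p : ℚ_[p]) ^ (((k : ℕ) : ℤ) - (N : ℤ)) * u'.2)
        = ((p : ℚ_[p]) ^ (((i : ℕ) : ℤ) - (N : ℤ)) * u.1,
        (p : ℚ_[p]) ^ (((i : ℕ) : ℤ) - (N : ℤ)) * u.2) := heq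
    have e1 : psiAux p ((p : ℚ_[p]) ^ (((i : ℕ) : ℤ) - (N : ℤ)) * u.1,
        (p : ℚ_[p]) ^ (((i : ℕ) : ℤ) - (N : ℤ)) * u.2)
        = (p : ℝ) ^ (-(((i : ℕ) : ℤ) - (N : ℤ))) := by
      rw [hψmul, (mem_X0_iff p u).mp huX, mul_one]
    have e2 : psiAux p ((p : ℚ_[p]) ^ (((k : ℕ) : ℤ) - (N : ℤ)) * u'.1,
        (p : ℚ_[p]) ^ (((k : ℕ) : ℤ) - (N : ℤ)) * u'.2)
        = (p : ℝ) ^ (-(((k : ℕ) : ℤ) - (N : ℤ))) := by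
      rw [hψmul, (mem_X0_iff p u').mp hu'X, mul_one]
    rw [heq'] at e2
    have hmm : (-(((i : ℕ) : ℤ) - (N : ℤ))) = (-(((k : ℕ) : ℤ) - (N : ℤ))) :=
      (zpow_right_inj₀ hppos hpne1).mp (e1.symm.trans e2)
    exact hik (Fin.ext (by omega))
  · -- Λ' as union of scaled pieces
    apply Set.Subset.antisymm
    · intro v hv
      have h1 : φ v = 1 := (hmemΛ' v).mp hv
      have hvne : v ≠ 0 := hsubX hv
      have hpsine : psiAux p v ≠ 0 := fun h0 => hvne ((psiAux_eq_zero_iff p v).mp h0)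
      rcases psiAux_dichotomy p v with h0 | ⟨j, hj⟩
      · exact absurd h0 hpsine
      have huψ : psiAux p ((p : ℚ_[p]) ^ j * v.1, (p : ℚ_[p]) ^ j * v.2) = 1 := by
        rw [hψmul, hj, ← zpow_add₀ hpR0, neg_add_cancel, zpow_zero]
      have huX : ((p : ℚ_[p]) ^ j * v.1, (p : ℚ_[p]) ^ j * v.2) ∈ X0 p :=
        (mem_X0_iff p _).mpr huψ
      have huφ : φ ((p : ℚ_[p]) ^ j * v.1, (p : ℚ_[p]) ^ j * v.2) = (p : ℝ) ^ (-j) := by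
        rw [hφmul, h1, mul_one]
      obtain ⟨hb1, hb2⟩ := key _ huX (-j) huφ
      have hlt : (-j + (N : ℤ)).toNat < 2 * N + 1 := by omega
      refine Set.mem_iUnion.mpr ⟨⟨(-j + (N : ℤ)).toNat, hlt⟩, ?_⟩
      have hval : ((((-j + (N : ℤ)).toNat : ℕ)) : ℤ) - (N : ℤ) = -j := by omega
      refine ⟨((p : ℚ_[p]) ^ j * v.1, (p : ℚ_[p]) ^ j * v.2), ⟨huX, ?_⟩, ?_⟩
      · show φ ((p : ℚ_[p]) ^ j * v.1, (p : ℚ_[p]) ^ j * v.2)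
            = (p : ℝ) ^ (((((-j + (N : ℤ)).toNat : ℕ)) : ℤ) - (N : ℤ))
        rw [hval]; exact huφ
      · show ((p : ℚ_[p]) ^ (((((-j + (N : ℤ)).toNat : ℕ)) : ℤ) - (N : ℤ)) *
              ((p : ℚ_[p]) ^ j * v.1, (p : ℚ_[p]) ^ j * v.2).1,
            (p : ℚ_[p]) ^ (((((-j + (N : ℤ)).toNat : ℕ)) : ℤ) - (N : ℤ)) *
              ((p : ℚ_[p]) ^ j * v.1, (p : ℚ_[p]) ^ j * v.2).2) = v
        rw [hval]
        exact Prod.ext (hcanc j v.1) (hcanc j v.2)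
    · refine Set.iUnion_subset fun i => ?_
      rintro w ⟨u, ⟨huX, huφ⟩, rfl⟩
      rw [hmemΛ']
      show φ ((p : ℚ_[p]) ^ (((i : ℕ) : ℤ) - (N : ℤ)) * u.1,
          (p : ℚ_[p]) ^ (((i : ℕ) : ℤ) - (N : ℤ)) * u.2) = 1
      rw [hφmul, huφ, ← zpow_add₀ hpR0, neg_add_cancel, zpow_zero]
end

section
/- Fix a prime p. Let φ : A → B be a surjective homomorphism of abelian groups, and let μ be a p-invariant B-valued distribution on X. Then there exists a p-invariant A-valued distribution μ̃ on X such that φ(μ̃(U)) = μ(U) for every compact open subset U of X. -/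
/-- A compact open subset of `X`: compact and open in `ℚ_p × ℚ_p` and contained in `X`. -/
def IsCompactOpen (p : ℕ) [Fact p.Prime] (U : Set (ℚ_[p] × ℚ_[p])) : Prop :=
  IsCompact U ∧ IsOpen U ∧ U ⊆ X p

/-- An `A`-valued distribution on `X`: additive on disjoint compact open subsets of `X`. -/
def IsDistribution (p : ℕ) [Fact p.Prime] {A : Type*} [AddCommGroup A]
    (μ : Set (ℚ_[p] × ℚ_[p]) → A) : Prop :=
  ∀ U V, IsCompactOpen p U → IsCompactOpen p V → Disjoint U V → μ (U ∪ V) = μ U + μ V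

/-- `μ` is `p`-invariant: `μ(p·U) = μ(U)` for every compact open `U ⊆ X`. -/
def IsPInvariant (p : ℕ) [Fact p.Prime] {A : Type*} [AddCommGroup A]
    (μ : Set (ℚ_[p] × ℚ_[p]) → A) : Prop :=
  ∀ U, IsCompactOpen p U → μ (pScale p 1 U) = μ U

namespace St4

variable (p : ℕ) [Fact p.Prime]

lemma pR_pos : (0:ℝ) < (p:ℝ) := by exact_mod_cast (Fact.out : p.Prime).pos
lemma pR_one_lt : (1:ℝ) < (p:ℝ) := by exact_mod_cast (Fact.out : p.Prime).one_lt
lemma pQ_ne : ((p : ℚ_[p])) ≠ 0 := by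
  exact_mod_cast Nat.cast_ne_zero.mpr (Fact.out : p.Prime).ne_zero

/-- The scaling map. -/
noncomputable def sm (j : ℤ) (v : ℚ_[p] × ℚ_[p]) : ℚ_[p] × ℚ_[p] :=
  ((p : ℚ_[p]) ^ j * v.1, (p : ℚ_[p]) ^ j * v.2)

lemma sm_sm (j k : ℤ) (v : ℚ_[p] × ℚ_[p]) : sm p j (sm p k v) = sm p (j + k) v := by
  simp only [sm, Prod.mk.injEq, ← mul_assoc, ← zpow_add₀ (pQ_ne p)]

lemma sm_zero (v : ℚ_[p] × ℚ_[p]) : sm p 0 v = v := by simp [sm]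

lemma continuous_sm (j : ℤ) : Continuous (sm p j) := by
  unfold sm; fun_prop

lemma pScale_eq_image (j : ℤ) (U : Set (ℚ_[p] × ℚ_[p])) : pScale p j U = sm p j '' U := rfl

lemma pScale_eq_preimage (j : ℤ) (U : Set (ℚ_[p] × ℚ_[p])) :
    pScale p j U = sm p (-j) ⁻¹' U := by
  ext v
  constructor
  · rintro ⟨u, hu, rfl⟩
    show sm p (-j) (sm p j u) ∈ U
    rw [sm_sm, neg_add_cancel, sm_zero]
    exact hu
  · intro hv
    refine ⟨sm p (-j) v, hv, ?_⟩
    show sm p j (sm p (-j) v) = v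
    rw [sm_sm, add_neg_cancel, sm_zero]

lemma pScale_pScale (j k : ℤ) (U : Set (ℚ_[p] × ℚ_[p])) :
    pScale p j (pScale p k U) = pScale p (j + k) U := by
  ext v
  simp only [pScale_eq_preimage, Set.mem_preimage, sm_sm]
  rw [show -k + -j = -(j + k) by ring]

lemma pScale_zero (U : Set (ℚ_[p] × ℚ_[p])) : pScale p 0 U = U := by
  ext v
  simp [pScale_eq_preimage, sm_zero]

lemma pScale_union (j : ℤ) (U V : Set (ℚ_[p] × ℚ_[p])) :
    pScale p j (U ∪ V) = pScale p j U ∪ pScale p j V := by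
  simp [pScale_eq_preimage, Set.preimage_union]

lemma pScale_inter (j : ℤ) (U V : Set (ℚ_[p] × ℚ_[p])) :
    pScale p j (U ∩ V) = pScale p j U ∩ pScale p j V := by
  simp [pScale_eq_preimage, Set.preimage_inter]

lemma pScale_empty (j : ℤ) : pScale p j (∅ : Set (ℚ_[p] × ℚ_[p])) = ∅ := by
  simp [pScale]

lemma pScale_disjoint (j : ℤ) {U V : Set (ℚ_[p] × ℚ_[p])} (h : Disjoint U V) :
    Disjoint (pScale p j U) (pScale p j V) := by
  rw [pScale_eq_preimage, pScale_eq_preimage]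
  exact h.preimage _

lemma pScale_nonempty (j : ℤ) {U : Set (ℚ_[p] × ℚ_[p])} :
    (pScale p j U).Nonempty ↔ U.Nonempty := by
  rw [pScale_eq_image]; exact Set.image_nonempty

lemma sm_zero_iff (j : ℤ) (v : ℚ_[p] × ℚ_[p]) : sm p j v = 0 ↔ v = 0 := by
  have hp := zpow_ne_zero j (pQ_ne p)
  constructor
  · intro h
    rw [Prod.ext_iff] at h ⊢
    simp only [sm] at h
    rcases h with ⟨h1, h2⟩
    exact ⟨by simpa [hp] using h1, by simpa [hp] using h2⟩
  · rintro rfl; simp [sm]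

lemma IsCompactOpen.pScale {U : Set (ℚ_[p] × ℚ_[p])} (h : IsCompactOpen p U) (j : ℤ) :
    IsCompactOpen p (pScale p j U) := by
  obtain ⟨hc, ho, hx⟩ := h
  refine ⟨?_, ?_, ?_⟩
  · rw [pScale_eq_image]; exact hc.image (continuous_sm p j)
  · rw [pScale_eq_preimage]; exact ho.preimage (continuous_sm p (-j))
  · rw [pScale_eq_preimage]
    intro v hv
    have := hx hv
    simp only [X, Set.mem_setOf_eq] at this ⊢
    intro h0
    exact this (by rw [h0]; simpa using (sm_zero_iff p (-j) 0).mpr rfl)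

/-! ### Annuli -/

/-- sup-norm of a vector. -/
noncomputable def nrm (v : ℚ_[p] × ℚ_[p]) : ℝ := max ‖v.1‖ ‖v.2‖

lemma continuous_nrm : Continuous (nrm p) := by unfold nrm; fun_prop

/-- The annulus of vectors of norm `p^(-j)`. -/
def Ann (j : ℤ) : Set (ℚ_[p] × ℚ_[p]) := {v | nrm p v = (p:ℝ) ^ (-j)}

lemma norm_p_zpow (j : ℤ) : ‖((p:ℚ_[p]))^j‖ = (p:ℝ) ^ (-j) := by
  rw [norm_zpow, Padic.norm_p, inv_zpow, ← zpow_neg]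

lemma nrm_sm (j : ℤ) (v : ℚ_[p] × ℚ_[p]) :
    nrm p (sm p j v) = (p:ℝ) ^ (-j) * nrm p v := by
  simp only [nrm, sm, norm_mul, norm_p_zpow]
  rw [mul_max_of_nonneg _ _ (le_of_lt (zpow_pos (pR_pos p) _))]

lemma pScale_Ann (k j : ℤ) : pScale p k (Ann p j) = Ann p (j + k) := by
  rw [pScale_eq_preimage]
  ext v
  simp only [Set.mem_preimage, Ann, Set.mem_setOf_eq, nrm_sm, neg_neg]
  constructor
  · intro h
    have := congrArg (fun x => ((p:ℝ)^(-k)) * x) h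
    rw [← mul_assoc, ← zpow_add₀ (ne_of_gt (pR_pos p)), neg_add_cancel, zpow_zero, one_mul,
      ← zpow_add₀ (ne_of_gt (pR_pos p))] at this
    rw [this]; ring_nf
  · intro h
    rw [h, ← zpow_add₀ (ne_of_gt (pR_pos p))]
    ring_nf

lemma nrm_eq_zero_iff (v : ℚ_[p] × ℚ_[p]) : nrm p v = 0 ↔ v = 0 := by
  constructor
  · intro h
    have h1 : ‖v.1‖ ≤ 0 := le_of_le_of_eq (le_max_left _ _) h
    have h2 : ‖v.2‖ ≤ 0 := le_of_le_of_eq (le_max_right _ _) h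
    have := norm_eq_zero.mp (le_antisymm h1 (norm_nonneg _))
    have := norm_eq_zero.mp (le_antisymm h2 (norm_nonneg _))
    rw [Prod.ext_iff]; tauto
  · rintro rfl; simp [nrm]

lemma nrm_mem_range {v : ℚ_[p] × ℚ_[p]} (hv : v ≠ 0) : ∃ z : ℤ, nrm p v = (p:ℝ) ^ z := by
  have hnn : (0:ℝ) ≤ nrm p v := le_max_of_le_left (norm_nonneg _)
  have hpos : 0 < nrm p v := by
    rcases lt_or_eq_of_le hnn with h | h
    · exact h
    · exact absurd ((nrm_eq_zero_iff p v).mp h.symm) hv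
  rcases max_choice ‖v.1‖ ‖v.2‖ with h | h
  · have h1 : v.1 ≠ 0 := by
      intro h0; rw [nrm, h, h0] at hpos; simp at hpos
    exact ⟨-v.1.valuation, by rw [nrm, h, Padic.norm_eq_zpow_neg_valuation h1]⟩
  · have h2 : v.2 ≠ 0 := by
      intro h0; rw [nrm, h, h0] at hpos; simp at hpos
    exact ⟨-v.2.valuation, by rw [nrm, h, Padic.norm_eq_zpow_neg_valuation h2]⟩

lemma Ann_sub_X (j : ℤ) : Ann p j ⊆ X p := by
  intro v hv
  simp only [Ann, Set.mem_setOf_eq] at hv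
  simp only [X, Set.mem_setOf_eq]
  intro h0
  rw [h0] at hv
  have : (0:ℝ) < (p:ℝ)^(-j) := zpow_pos (pR_pos p) _
  rw [(nrm_eq_zero_iff p 0).mpr rfl] at hv
  exact absurd hv.symm (ne_of_gt this)

lemma X_mem_Ann {v : ℚ_[p] × ℚ_[p]} (hv : v ∈ X p) : ∃ j : ℤ, v ∈ Ann p j := by
  obtain ⟨z, hz⟩ := nrm_mem_range p (show v ≠ 0 from hv)
  exact ⟨-z, by simpa [Ann, neg_neg] using hz⟩

lemma Ann_open (j : ℤ) : IsOpen (Ann p j) := by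
  have : Ann p j = nrm p ⁻¹' (Set.Ioo ((p:ℝ)^(-j-1)) ((p:ℝ)^(-j+1))) := by
    ext v
    simp only [Ann, Set.mem_setOf_eq, Set.mem_preimage, Set.mem_Ioo]
    constructor
    · intro h
      rw [h]
      exact ⟨zpow_lt_zpow_right₀ (pR_one_lt p) (by omega),
        zpow_lt_zpow_right₀ (pR_one_lt p) (by omega)⟩
    · rintro ⟨h1, h2⟩
      have hv : v ≠ 0 := by
        intro h0
        rw [h0, (nrm_eq_zero_iff p 0).mpr rfl] at h1
        have : (0:ℝ) < (p:ℝ)^(-j-1) := zpow_pos (pR_pos p) _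
        linarith
      obtain ⟨z, hz⟩ := nrm_mem_range p hv
      rw [hz] at h1 h2 ⊢
      rw [zpow_lt_zpow_iff_right₀ (pR_one_lt p)] at h1 h2
      congr 1
      omega
  rw [this]
  exact IsOpen.preimage (continuous_nrm p) isOpen_Ioo

lemma Ann_closed (j : ℤ) : IsClosed (Ann p j) :=
  IsClosed.preimage (continuous_nrm p) isClosed_singleton

lemma Ann_disjoint {i j : ℤ} (h : i ≠ j) : Disjoint (Ann p i) (Ann p j) := by
  rw [Set.disjoint_left]
  intro v hi hj
  simp only [Ann, Set.mem_setOf_eq] at hi hj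
  have := zpow_right_injective₀ (pR_pos p) (ne_of_gt (pR_one_lt p)) (hi ▸ hj : (p:ℝ)^(-i) = (p:ℝ)^(-j))
  omega

lemma X0_eq_Ann : X0 p = Ann p 0 := by
  ext v
  simp only [X0, Ann, Set.mem_setOf_eq, neg_zero, zpow_zero, nrm]
  constructor
  · rintro ⟨h1, h2, h3⟩
    rcases h3 with h | h
    · rw [max_eq_left (h ▸ h2)]; exact h
    · rw [max_eq_right (h ▸ h1)]; exact h
  · intro h
    refine ⟨le_of_le_of_eq (le_max_left _ _) h, le_of_le_of_eq (le_max_right _ _) h, ?_⟩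
    rcases max_choice ‖v.1‖ ‖v.2‖ with hc | hc <;> rw [hc] at h
    · exact Or.inl h
    · exact Or.inr h

lemma Ann_zero_compact : IsCompact (Ann p 0) := by
  have : Ann p 0 = (fun w : ℤ_[p] × ℤ_[p] => ((w.1 : ℚ_[p]), (w.2 : ℚ_[p]))) ''
      {w | max ‖w.1‖ ‖w.2‖ = 1} := by
    ext v
    simp only [Ann, Set.mem_setOf_eq, Set.mem_image, neg_zero, zpow_zero, nrm]
    constructor
    · intro h
      have h1 : ‖v.1‖ ≤ 1 := le_of_le_of_eq (le_max_left _ _) h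
      have h2 : ‖v.2‖ ≤ 1 := le_of_le_of_eq (le_max_right _ _) h
      exact ⟨(⟨v.1, h1⟩, ⟨v.2, h2⟩), h, rfl⟩
    · rintro ⟨w, hw, rfl⟩
      exact hw
  rw [this]
  have hcl : IsClosed {w : ℤ_[p] × ℤ_[p] | max ‖w.1‖ ‖w.2‖ = 1} := by
    have : Continuous (fun w : ℤ_[p] × ℤ_[p] => max ‖w.1‖ ‖w.2‖) := by fun_prop
    exact IsClosed.preimage this isClosed_singleton
  exact (hcl.isCompact).image (by fun_prop)

lemma Ann_compact (j : ℤ) : IsCompact (Ann p j) := by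
  have : Ann p j = pScale p j (Ann p 0) := by rw [pScale_Ann, zero_add]
  rw [this, pScale_eq_image]
  exact (Ann_zero_compact p).image (continuous_sm p j)

lemma Ann_compactOpen (j : ℤ) : IsCompactOpen p (Ann p j) :=
  ⟨Ann_compact p j, Ann_open p j, Ann_sub_X p j⟩

lemma finite_ann_indices {U : Set (ℚ_[p] × ℚ_[p])} (hU : IsCompactOpen p U) :
    {j : ℤ | (U ∩ Ann p j).Nonempty}.Finite := by
  obtain ⟨hc, ho, hx⟩ := hU
  have hcov : U ⊆ ⋃ j : ℤ, Ann p j := by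
    intro v hv
    obtain ⟨j, hj⟩ := X_mem_Ann p (hx hv)
    exact Set.mem_iUnion.mpr ⟨j, hj⟩
  obtain ⟨t, ht⟩ := hc.elim_finite_subcover (fun j : ℤ => Ann p j) (fun j => Ann_open p j) hcov
  apply Set.Finite.subset t.finite_toSet
  rintro j ⟨v, hvU, hvA⟩
  obtain ⟨j', hj't, hj'⟩ := Set.mem_iUnion₂.mp (ht hvU)
  rcases eq_or_ne j j' with rfl | hne
  · exact hj't
  · exact absurd hvA (Set.disjoint_right.mp (Ann_disjoint p hne) hj')


/-! ### Generalities on distributions -/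

section Mu

variable {B : Type*} [AddCommGroup B]
variable {p}

lemma co_empty : IsCompactOpen p (∅ : Set (ℚ_[p] × ℚ_[p])) :=
  ⟨isCompact_empty, isOpen_empty, Set.empty_subset _⟩

lemma co_union {U V : Set (ℚ_[p] × ℚ_[p])} (hU : IsCompactOpen p U) (hV : IsCompactOpen p V) :
    IsCompactOpen p (U ∪ V) :=
  ⟨hU.1.union hV.1, hU.2.1.union hV.2.1, Set.union_subset hU.2.2 hV.2.2⟩

lemma co_inter {U V : Set (ℚ_[p] × ℚ_[p])} (hU : IsCompactOpen p U) (hV : IsCompactOpen p V) :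
    IsCompactOpen p (U ∩ V) :=
  ⟨hU.1.inter_right hV.1.isClosed, hU.2.1.inter hV.2.1,
    (Set.inter_subset_left).trans hU.2.2⟩

lemma co_biUnion {ι : Type*} (s : Finset ι) (f : ι → Set (ℚ_[p] × ℚ_[p]))
    (hf : ∀ i ∈ s, IsCompactOpen p (f i)) : IsCompactOpen p (⋃ i ∈ s, f i) := by
  classical
  induction s using Finset.induction_on with
  | empty => simpa using co_empty
  | @insert a t hat ih =>
    rw [Finset.set_biUnion_insert]
    exact co_union (hf a (Finset.mem_insert_self a t))
      (ih fun i hi => hf i (Finset.mem_insert_of_mem hi))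

variable {μ : Set (ℚ_[p] × ℚ_[p]) → B} (hμ : IsDistribution p μ)
include hμ

lemma mu_empty : μ ∅ = 0 := by
  have := hμ ∅ ∅ co_empty co_empty disjoint_bot_left
  rw [Set.union_empty] at this
  exact (left_eq_add.mp this)

lemma mu_biUnion {ι : Type*} (s : Finset ι) (f : ι → Set (ℚ_[p] × ℚ_[p]))
    (hf : ∀ i ∈ s, IsCompactOpen p (f i))
    (hd : ∀ i ∈ s, ∀ j ∈ s, i ≠ j → Disjoint (f i) (f j)) :
    μ (⋃ i ∈ s, f i) = ∑ i ∈ s, μ (f i) := by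
  classical
  induction s using Finset.induction_on with
  | empty => simpa using mu_empty hμ
  | @insert a t hat ih =>
    rw [Finset.set_biUnion_insert, Finset.sum_insert hat]
    have hco : IsCompactOpen p (⋃ i ∈ t, f i) :=
      co_biUnion t f fun i hi => hf i (Finset.mem_insert_of_mem hi)
    have hdisj : Disjoint (f a) (⋃ i ∈ t, f i) := by
      rw [Set.disjoint_iUnion₂_right]
      intro i hi
      exact hd a (Finset.mem_insert_self a t) i (Finset.mem_insert_of_mem hi)
        (fun h => hat (h ▸ hi))
    rw [hμ _ _ (hf a (Finset.mem_insert_self a t)) hco hdisj]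
    rw [ih (fun i hi => hf i (Finset.mem_insert_of_mem hi))
      (fun i hi j hj hij => hd i (Finset.mem_insert_of_mem hi) j (Finset.mem_insert_of_mem hj) hij)]

lemma mu_pScale (hinv : IsPInvariant p μ) (j : ℤ) {U : Set (ℚ_[p] × ℚ_[p])}
    (hU : IsCompactOpen p U) : μ (pScale p j U) = μ U := by
  induction j using Int.induction_on with
  | zero => rw [St4.pScale_zero]
  | succ k ih =>
    have : pScale p (k + 1 : ℤ) U = pScale p 1 (pScale p k U) := by
      rw [St4.pScale_pScale]; norm_num [add_comm]
    rw [this, hinv _ (IsCompactOpen.pScale p hU k), ih]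
  | pred k ih =>
    have h1 : pScale p 1 (pScale p (-(k:ℤ)-1) U) = pScale p (-(k:ℤ)) U := by
      rw [St4.pScale_pScale]; norm_num
    have h2 := hinv _ (IsCompactOpen.pScale p hU (-(k:ℤ)-1))
    rw [h1] at h2
    rw [← h2]
    exact ih

end Mu

/-! ### Locally constant functions on `X₀` -/

instance : CompactSpace (X0 p) :=
  isCompact_iff_compactSpace.mp (by rw [X0_eq_Ann]; exact Ann_zero_compact p)

lemma X0_open : IsOpen (X0 p) := by rw [X0_eq_Ann]; exact Ann_open p 0

lemma X0_compactOpen : IsCompactOpen p (X0 p) := by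
  rw [X0_eq_Ann]; exact Ann_compactOpen p 0

section Fib

variable {p}
variable {γ : Type*}

/-- The fiber of a locally constant function on `X₀`, as a subset of the plane. -/
def fib (f : LocallyConstant (X0 p) γ) (n : γ) : Set (ℚ_[p] × ℚ_[p]) :=
  Subtype.val '' (f ⁻¹' {n})

lemma fib_co (f : LocallyConstant (X0 p) γ) (n : γ) : IsCompactOpen p (fib f n) := by
  have hclopen : IsClopen (f ⁻¹' {n}) := f.isLocallyConstant.isClopen_fiber n
  refine ⟨?_, ?_, ?_⟩
  · exact (hclopen.isClosed.isCompact).image continuous_subtype_val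
  · exact (X0_open p).isOpenMap_subtype_val _ hclopen.isOpen
  · refine (Set.image_subset_range _ _).trans ?_
    rw [Subtype.range_coe]
    exact X0_eq_Ann p ▸ Ann_sub_X p 0

lemma fib_disjoint (f : LocallyConstant (X0 p) γ) {m n : γ} (h : m ≠ n) :
    Disjoint (fib f m) (fib f n) := by
  apply Set.disjoint_image_of_injective Subtype.val_injective
  rw [Set.disjoint_left]
  rintro x (hx : f x = m) (hx' : f x = n)
  exact h (hx ▸ hx')

lemma fib_empty_of_not_mem_range (f : LocallyConstant (X0 p) γ) {n : γ}
    (h : n ∉ Set.range f) : fib f n = ∅ := by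
  rw [fib, Set.image_eq_empty]
  ext x
  simp only [Set.mem_preimage, Set.mem_singleton_iff, Set.mem_empty_iff_false, iff_false]
  exact fun hx => h ⟨x, hx⟩

variable {B : Type*} [AddCommGroup B]

/-- The value of a distribution on a locally constant integer-valued function on `X₀`. -/
noncomputable def nu (μ : Set (ℚ_[p] × ℚ_[p]) → B) (f : LocallyConstant (X0 p) ℤ) : B :=
  ∑ n ∈ (f.range_finite).toFinset, n • μ (fib f n)

variable {μ : Set (ℚ_[p] × ℚ_[p]) → B} (hμ : IsDistribution p μ)
include hμ

lemma nu_eq_sum (f : LocallyConstant (X0 p) ℤ) (s : Finset ℤ) (hs : Set.range f ⊆ s) :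
    nu μ f = ∑ n ∈ s, n • μ (fib f n) := by
  apply Finset.sum_subset
  · intro n hn
    exact hs ((f.range_finite).mem_toFinset.mp hn)
  · intro n _ hn
    rw [fib_empty_of_not_mem_range f (fun h => hn ((f.range_finite).mem_toFinset.mpr h)),
      mu_empty hμ, smul_zero]

lemma mu_fib_refine [DecidableEq γ] (q : LocallyConstant (X0 p) γ) (k : γ → ℤ) (a : ℤ) :
    μ (fib (q.map k) a) = ∑ c ∈ ((q.range_finite).toFinset.filter fun c => k c = a),
      μ (fib q c) := by
  have hset : fib (q.map k) a =
      ⋃ c ∈ ((q.range_finite).toFinset.filter fun c => k c = a), fib q c := by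
    ext v
    simp only [Set.mem_iUnion₂, fib, Set.mem_image, Set.mem_preimage, Set.mem_singleton_iff]
    constructor
    · rintro ⟨x, hx, rfl⟩
      refine ⟨q x, ?_, x, rfl, rfl⟩
      rw [Finset.mem_filter, (q.range_finite).mem_toFinset]
      exact ⟨⟨x, rfl⟩, by simpa [LocallyConstant.map_apply] using hx⟩
    · rintro ⟨c, hc, x, hx, rfl⟩
      rw [Finset.mem_filter] at hc
      exact ⟨x, by simp [LocallyConstant.map_apply, hx, hc.2], rfl⟩
  rw [hset]
  apply mu_biUnion hμ
  · intro c _; exact fib_co q c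
  · intro i _ j _ hij; exact fib_disjoint q hij

lemma nu_map (q : LocallyConstant (X0 p) γ) (k : γ → ℤ) :
    nu μ (q.map k) = ∑ c ∈ (q.range_finite).toFinset, k c • μ (fib q c) := by
  classical
  rw [nu_eq_sum hμ (q.map k) ((q.range_finite).toFinset.image k) ?hr]
  case hr =>
    rintro _ ⟨x, rfl⟩
    exact Finset.mem_image_of_mem k ((q.range_finite).mem_toFinset.mpr ⟨x, rfl⟩)
  calc ∑ a ∈ (q.range_finite).toFinset.image k, a • μ (fib (q.map k) a)
      = ∑ a ∈ (q.range_finite).toFinset.image k,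
          ∑ c ∈ ((q.range_finite).toFinset.filter fun c => k c = a), k c • μ (fib q c) := by
        apply Finset.sum_congr rfl
        intro a _
        rw [mu_fib_refine hμ q k a, Finset.smul_sum]
        apply Finset.sum_congr rfl
        intro c hc
        rw [(Finset.mem_filter.mp hc).2]
    _ = ∑ c ∈ (q.range_finite).toFinset, k c • μ (fib q c) := by
        apply Finset.sum_fiberwise_of_maps_to
        intro c hc
        exact Finset.mem_image_of_mem k hc

lemma nu_add (f g : LocallyConstant (X0 p) ℤ) : nu μ (f + g) = nu μ f + nu μ g := by
  classical
  set q : LocallyConstant (X0 p) (ℤ × ℤ) :=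
    ⟨fun x => (f x, g x), IsLocallyConstant.prodMk f.2 g.2⟩ with hq
  have hf : f = q.map Prod.fst := by ext x; simp [hq, LocallyConstant.map_apply]
  have hg : g = q.map Prod.snd := by ext x; simp [hq, LocallyConstant.map_apply]
  have hfg : f + g = q.map (fun c => c.1 + c.2) := by
    ext x; simp [hq, LocallyConstant.map_apply]
  have h1 : nu μ f = ∑ c ∈ (q.range_finite).toFinset, c.1 • μ (fib q c) := by
    conv_lhs => rw [hf]
    exact nu_map hμ q _
  have h2 : nu μ g = ∑ c ∈ (q.range_finite).toFinset, c.2 • μ (fib q c) := by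
    conv_lhs => rw [hg]
    exact nu_map hμ q _
  rw [hfg, nu_map hμ q _, h1, h2, ← Finset.sum_add_distrib]
  apply Finset.sum_congr rfl
  intro c _
  rw [add_smul]

end Fib

/-! ### Indicator locally constant functions -/

section Ind

variable {p}

lemma clopen_pre {S : Set (ℚ_[p] × ℚ_[p])} (hS : IsCompactOpen p S) :
    IsClopen (((↑) : X0 p → ℚ_[p] × ℚ_[p]) ⁻¹' S) :=
  ⟨IsClosed.preimage continuous_subtype_val hS.1.isClosed,
   IsOpen.preimage continuous_subtype_val hS.2.1⟩

open Classical in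
/-- Indicator of a subset of the plane, as a locally constant function on `X₀`
(junk value `0` if the trace on `X₀` is not clopen). -/
noncomputable def ind (S : Set (ℚ_[p] × ℚ_[p])) : LocallyConstant (X0 p) ℤ :=
  if h : IsClopen (((↑) : X0 p → ℚ_[p] × ℚ_[p]) ⁻¹' S) then LocallyConstant.charFn ℤ h else 0

lemma ind_apply_mem {S : Set (ℚ_[p] × ℚ_[p])}
    (h : IsClopen (((↑) : X0 p → ℚ_[p] × ℚ_[p]) ⁻¹' S))
    {x : X0 p} (hx : (x : ℚ_[p] × ℚ_[p]) ∈ S) : ind S x = 1 := by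
  rw [ind, dif_pos h]
  have := congrFun (LocallyConstant.coe_charFn ℤ h) x
  rw [this, Set.indicator_of_mem (Set.mem_preimage.mpr hx), Pi.one_apply]

lemma ind_apply_not_mem {S : Set (ℚ_[p] × ℚ_[p])}
    (h : IsClopen (((↑) : X0 p → ℚ_[p] × ℚ_[p]) ⁻¹' S))
    {x : X0 p} (hx : (x : ℚ_[p] × ℚ_[p]) ∉ S) : ind S x = 0 := by
  rw [ind, dif_pos h]
  have := congrFun (LocallyConstant.coe_charFn ℤ h) x
  rw [this, Set.indicator_of_notMem (fun hc => hx (Set.mem_preimage.mp hc))]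

lemma ind_empty : (ind (∅ : Set (ℚ_[p] × ℚ_[p]))) = (0 : LocallyConstant (X0 p) ℤ) := by
  ext x
  have h : IsClopen (((↑) : X0 p → ℚ_[p] × ℚ_[p]) ⁻¹' (∅ : Set (ℚ_[p] × ℚ_[p]))) := by
    rw [Set.preimage_empty]; exact isClopen_empty
  rw [ind_apply_not_mem h (Set.notMem_empty _)]
  rfl

lemma ind_union {S S' : Set (ℚ_[p] × ℚ_[p])}
    (h : IsClopen (((↑) : X0 p → ℚ_[p] × ℚ_[p]) ⁻¹' S))
    (h' : IsClopen (((↑) : X0 p → ℚ_[p] × ℚ_[p]) ⁻¹' S'))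
    (hd : Disjoint S S') : ind (S ∪ S') = ind S + ind S' := by
  ext x
  have hu : IsClopen (((↑) : X0 p → ℚ_[p] × ℚ_[p]) ⁻¹' (S ∪ S')) := by
    rw [Set.preimage_union]; exact h.union h'
  rw [LocallyConstant.add_apply]
  by_cases hx : (x : ℚ_[p] × ℚ_[p]) ∈ S
  · have hx' : (x : ℚ_[p] × ℚ_[p]) ∉ S' := fun hc => Set.disjoint_left.mp hd hx hc
    rw [ind_apply_mem hu (Or.inl hx), ind_apply_mem h hx, ind_apply_not_mem h' hx']
    norm_num
  · by_cases hx' : (x : ℚ_[p] × ℚ_[p]) ∈ S'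
    · rw [ind_apply_mem hu (Or.inr hx'), ind_apply_not_mem h hx, ind_apply_mem h' hx']
      norm_num
    · rw [ind_apply_not_mem hu (fun hc => hc.elim hx hx'), ind_apply_not_mem h hx,
        ind_apply_not_mem h' hx']
      norm_num

variable {B : Type*} [AddCommGroup B]
variable {μ : Set (ℚ_[p] × ℚ_[p]) → B} (hμ : IsDistribution p μ)
include hμ

lemma nu_ind {S : Set (ℚ_[p] × ℚ_[p])} (hS : IsCompactOpen p S) (hsub : S ⊆ X0 p) :
    nu μ (ind S) = μ S := by
  classical
  have h := clopen_pre hS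
  have hrange : Set.range (ind S) ⊆ (({0, 1} : Finset ℤ) : Set ℤ) := by
    rintro _ ⟨x, rfl⟩
    by_cases hx : (x : ℚ_[p] × ℚ_[p]) ∈ S
    · rw [ind_apply_mem h hx]; simp
    · rw [ind_apply_not_mem h hx]; simp
  rw [nu_eq_sum hμ (ind S) {0, 1} hrange]
  have h01 : (0:ℤ) ∉ ({1} : Finset ℤ) := by simp
  rw [show ({0, 1} : Finset ℤ) = insert 0 {1} from rfl, Finset.sum_insert h01,
    Finset.sum_singleton, zero_smul, zero_add, one_smul]
  congr 1
  ext v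
  simp only [fib, Set.mem_image, Set.mem_preimage, Set.mem_singleton_iff]
  constructor
  · rintro ⟨x, hx, rfl⟩
    by_contra hm
    rw [ind_apply_not_mem h hm] at hx
    exact absurd hx (by norm_num)
  · intro hv
    refine ⟨⟨v, hsub hv⟩, ?_, rfl⟩
    exact ind_apply_mem h hv

end Ind

/-! ### Assembling the lifted distribution -/

section Assemble

variable {p} {A : Type*} [AddCommGroup A] (ν : LocallyConstant (X0 p) ℤ →+ A)

/-- The contribution from the `j`-th annulus. -/
noncomputable def term (j : ℤ) (U : Set (ℚ_[p] × ℚ_[p])) : A :=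
  ν (ind (pScale p (-j) (U ∩ Ann p j)))

open Classical in
/-- The lifted distribution. -/
noncomputable def muLift (U : Set (ℚ_[p] × ℚ_[p])) : A :=
  if h : {j : ℤ | (U ∩ Ann p j).Nonempty}.Finite then ∑ j ∈ h.toFinset, term ν j U else 0

lemma pScale_mono (j : ℤ) {U V : Set (ℚ_[p] × ℚ_[p])} (h : U ⊆ V) :
    pScale p j U ⊆ pScale p j V := by
  rw [pScale_eq_preimage, pScale_eq_preimage]
  exact Set.preimage_mono h

lemma co_piece {U : Set (ℚ_[p] × ℚ_[p])} (hU : IsCompactOpen p U) (j : ℤ) :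
    IsCompactOpen p (pScale p (-j) (U ∩ Ann p j)) :=
  IsCompactOpen.pScale p (co_inter hU (Ann_compactOpen p j)) (-j)

lemma piece_sub_X0 (U : Set (ℚ_[p] × ℚ_[p])) (j : ℤ) :
    pScale p (-j) (U ∩ Ann p j) ⊆ X0 p := by
  refine (pScale_mono (-j) Set.inter_subset_right).trans ?_
  rw [pScale_Ann, add_neg_cancel, X0_eq_Ann]

lemma term_eq_zero {U : Set (ℚ_[p] × ℚ_[p])} {j : ℤ} (h : U ∩ Ann p j = ∅) :
    term ν j U = 0 := by
  rw [term, h, pScale_empty, ind_empty, map_zero]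

lemma muLift_eq {U : Set (ℚ_[p] × ℚ_[p])} (hU : IsCompactOpen p U) (s : Finset ℤ)
    (hs : {j : ℤ | (U ∩ Ann p j).Nonempty} ⊆ ↑s) :
    muLift ν U = ∑ j ∈ s, term ν j U := by
  have hfin := finite_ann_indices p hU
  rw [muLift, dif_pos hfin]
  apply Finset.sum_subset
  · intro j hj
    exact hs (hfin.mem_toFinset.mp hj)
  · intro j _ hj
    exact term_eq_zero ν (Set.not_nonempty_iff_eq_empty.mp (fun hne => hj (hfin.mem_toFinset.mpr hne)))

lemma muLift_additive {U V : Set (ℚ_[p] × ℚ_[p])} (hU : IsCompactOpen p U) (hV : IsCompactOpen p V)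
    (hd : Disjoint U V) : muLift ν (U ∪ V) = muLift ν U + muLift ν V := by
  classical
  set s := (finite_ann_indices p hU).toFinset ∪ (finite_ann_indices p hV).toFinset with hs
  have hsU : {j : ℤ | (U ∩ Ann p j).Nonempty} ⊆ ↑s := by
    intro j hj
    simp only [hs, Finset.coe_union, Set.mem_union, Set.Finite.coe_toFinset]
    exact Or.inl hj
  have hsV : {j : ℤ | (V ∩ Ann p j).Nonempty} ⊆ ↑s := by
    intro j hj
    simp only [hs, Finset.coe_union, Set.mem_union, Set.Finite.coe_toFinset]
    exact Or.inr hj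
  have hsUV : {j : ℤ | ((U ∪ V) ∩ Ann p j).Nonempty} ⊆ ↑s := by
    intro j hj
    rw [Set.mem_setOf_eq, Set.union_inter_distrib_right] at hj
    rcases Set.union_nonempty.mp hj with h | h
    · exact hsU h
    · exact hsV h
  rw [muLift_eq ν (co_union hU hV) s hsUV, muLift_eq ν hU s hsU, muLift_eq ν hV s hsV,
    ← Finset.sum_add_distrib]
  apply Finset.sum_congr rfl
  intro j _
  rw [term, term, term, Set.union_inter_distrib_right, pScale_union,
    ind_union (clopen_pre (co_piece hU j)) (clopen_pre (co_piece hV j))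
      (pScale_disjoint p (-j) ((hd.mono Set.inter_subset_left Set.inter_subset_left))),
    map_add]

lemma muLift_pinv {U : Set (ℚ_[p] × ℚ_[p])} (hU : IsCompactOpen p U) :
    muLift ν (pScale p 1 U) = muLift ν U := by
  classical
  set s0 := (finite_ann_indices p hU).toFinset with hs0
  have key : ∀ j : ℤ, pScale p 1 U ∩ Ann p j = pScale p 1 (U ∩ Ann p (j - 1)) := by
    intro j
    rw [pScale_inter, pScale_Ann, sub_add_cancel]
  have hsub : {j : ℤ | (pScale p 1 U ∩ Ann p j).Nonempty} ⊆ ↑(s0.image (· + 1)) := by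
    intro j hj
    rw [Set.mem_setOf_eq, key j, pScale_nonempty] at hj
    rw [Finset.coe_image]
    exact ⟨j - 1, Finset.mem_coe.mpr ((finite_ann_indices p hU).mem_toFinset.mpr hj), by simp⟩
  rw [muLift_eq ν (IsCompactOpen.pScale p hU 1) _ hsub,
    Finset.sum_image (fun a _ b _ h => by omega),
    muLift_eq ν hU s0 (by rw [hs0, Set.Finite.coe_toFinset])]
  apply Finset.sum_congr rfl
  intro i _
  rw [term, term, key (i + 1), add_sub_cancel_right, pScale_pScale,
    show (-(i + 1) + 1 : ℤ) = -i by ring]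

end Assemble

end St4

open St4 in
/-- Lifting of `p`-invariant distributions along a surjective homomorphism of abelian
groups: if `φ : A → B` is surjective and `μ` is a `p`-invariant `B`-valued distribution
on `X`, there is a `p`-invariant `A`-valued distribution `μ̃` with `φ ∘ μ̃ = μ` on
compact open subsets of `X`. -/
theorem stmt4 (p : ℕ) [Fact p.Prime] {A B : Type*} [AddCommGroup A] [AddCommGroup B]
    (φ : A →+ B) (hφ : Function.Surjective φ)
    (μ : Set (ℚ_[p] × ℚ_[p]) → B) (hμ : IsDistribution p μ) (hinv : IsPInvariant p μ) :
    ∃ μt : Set (ℚ_[p] × ℚ_[p]) → A, IsDistribution p μt ∧ IsPInvariant p μt ∧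
      ∀ U, IsCompactOpen p U → φ (μt U) = μ U := by
  classical
  haveI hfree : Module.Free ℤ (LocallyConstant (X0 p) ℤ) :=
    LocallyConstant.freeOfProfinite (Profinite.of (X0 p))
  set b := Module.Free.chooseBasis ℤ (LocallyConstant (X0 p) ℤ) with hb
  set νA : LocallyConstant (X0 p) ℤ →ₗ[ℤ] A :=
    b.constr ℤ (fun i => Classical.choose (hφ (nu μ (b i)))) with hνA
  have hadd : ∀ f g : LocallyConstant (X0 p) ℤ, nu μ (f + g) = nu μ f + nu μ g :=
    fun f g => nu_add hμ f g
  set nuH : LocallyConstant (X0 p) ℤ →+ B := AddMonoidHom.mk' (nu μ) hadd with hnuH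
  have hcomp : ∀ m : LocallyConstant (X0 p) ℤ, φ (νA m) = nu μ m := by
    have heq : φ.toIntLinearMap.comp νA = nuH.toIntLinearMap := by
      apply b.ext
      intro i
      rw [LinearMap.comp_apply, hνA, Module.Basis.constr_basis]
      exact Classical.choose_spec (hφ (nu μ (b i)))
    intro m
    have := DFunLike.congr_fun heq m
    simpa [hnuH] using this
  refine ⟨muLift νA.toAddMonoidHom, ?_, ?_, ?_⟩
  · intro U V hU hV hd
    exact muLift_additive _ hU hV hd
  · intro U hU
    exact muLift_pinv _ hU
  · intro U hU
    set s := (finite_ann_indices p hU).toFinset with hs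
    rw [muLift_eq _ hU s (by rw [hs, Set.Finite.coe_toFinset]), map_sum]
    have hterm : ∀ j ∈ s, φ (term νA.toAddMonoidHom j U) = μ (U ∩ Ann p j) := by
      intro j _
      rw [term, LinearMap.toAddMonoidHom_coe, hcomp,
        nu_ind hμ (co_piece hU j) (piece_sub_X0 U j),
        mu_pScale hμ hinv (-j) (co_inter hU (Ann_compactOpen p j))]
    rw [Finset.sum_congr rfl hterm]
    have hcover : U = ⋃ j ∈ s, (U ∩ Ann p j) := by
      ext v
      simp only [Set.mem_iUnion₂, Set.mem_inter_iff]
      constructor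
      · intro hv
        obtain ⟨j, hj⟩ := X_mem_Ann p (hU.2.2 hv)
        refine ⟨j, ?_, hv, hj⟩
        exact (finite_ann_indices p hU).mem_toFinset.mpr ⟨v, hv, hj⟩
      · rintro ⟨j, _, hv, _⟩
        exact hv
    conv_rhs => rw [hcover]
    rw [mu_biUnion hμ s _ (fun j _ => co_inter hU (Ann_compactOpen p j))
      (fun i _ j _ hij => ((Ann_disjoint p hij).mono Set.inter_subset_right Set.inter_subset_right).symm.symm)]
end

section
/- Fix a prime p. Let G be the subgroup of GL₂(ℚ_p) generated by SL₂(ℤ) and the matrix T = diag(p, 1), acting on row vectors in ℚ_p × ℚ_p on the right (so U·γ := {v·γ : v ∈ U}). Let A be an abelian group equipped with a right action of G by additive automorphisms, and let μ be a p-invariant A-valued distribution on X. Suppose that: (i) μ(U·γ) = μ(U)·γ for every compact open subset U of X and every γ ∈ SL₂(ℤ); and (ii) μ(B·T) = μ(B)·T for every set B = v + pⁿ·(ℤ_p × ℤ_p) with n ≥ 1 and v a primitive vector of ℤ_p². Then μ(U·γ) = μ(U)·γ for every compact open subset U of X and every γ ∈ G. -/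
open Matrix

/-- `X := ℚ_p² \ {0}`, with vectors written as row vectors `Fin 2 → ℚ_p`. -/
def Xv (p : ℕ) [Fact p.Prime] : Set (Fin 2 → ℚ_[p]) := {v | v ≠ 0}

/-- A primitive vector of `ℤ_p²`. -/
def IsPrimitiveVec (p : ℕ) [Fact p.Prime] (v : Fin 2 → ℚ_[p]) : Prop :=
  (∀ i, ‖v i‖ ≤ 1) ∧ ∃ i, ‖v i‖ = 1

/-- The ball `v + pⁿ·(ℤ_p × ℤ_p)`. -/
def ballV (p : ℕ) [Fact p.Prime] (v : Fin 2 → ℚ_[p]) (n : ℕ) : Set (Fin 2 → ℚ_[p]) :=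
  {w | ∀ i, ‖w i - v i‖ ≤ (p : ℝ) ^ (-(n : ℤ))}

/-- `p·U`. -/
def pScaleV (p : ℕ) [Fact p.Prime] (U : Set (Fin 2 → ℚ_[p])) : Set (Fin 2 → ℚ_[p]) :=
  (fun v => (p : ℚ_[p]) • v) '' U

/-- A compact open subset of `X`. -/
def IsCompactOpenV (p : ℕ) [Fact p.Prime] (U : Set (Fin 2 → ℚ_[p])) : Prop :=
  IsCompact U ∧ IsOpen U ∧ U ⊆ Xv p

/-- `U·γ := {v·γ : v ∈ U}` (right multiplication of row vectors). -/
def vmulSet (p : ℕ) [Fact p.Prime] (γ : GL (Fin 2) ℚ_[p]) (U : Set (Fin 2 → ℚ_[p])) :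
    Set (Fin 2 → ℚ_[p]) :=
  (fun v => Matrix.vecMul v (γ : Matrix (Fin 2) (Fin 2) ℚ_[p])) '' U

/-- The image of `SL₂(ℤ)` in `GL₂(ℚ_p)`. -/
def SLZset (p : ℕ) [Fact p.Prime] : Set (GL (Fin 2) ℚ_[p]) :=
  Set.range fun g : Matrix.SpecialLinearGroup (Fin 2) ℤ =>
    Matrix.SpecialLinearGroup.toGL
      (Matrix.SpecialLinearGroup.map (Int.castRingHom ℚ_[p]) g)

/-- The matrix `T = diag(p, 1)` as an element of `GL₂(ℚ_p)`. -/
noncomputable def Tmat (p : ℕ) [Fact p.Prime] : GL (Fin 2) ℚ_[p] :=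
  Matrix.GeneralLinearGroup.mkOfDetNeZero (Matrix.diagonal ![(p : ℚ_[p]), 1]) (by
    have hp : (p : ℚ_[p]) ≠ 0 :=
      Nat.cast_ne_zero.mpr (Fact.out (p := p.Prime)).ne_zero
    simp [Matrix.det_diagonal, Fin.prod_univ_two, hp])

/-- `G`: the subgroup of `GL₂(ℚ_p)` generated by `SL₂(ℤ)` and `T = diag(p, 1)`. -/
noncomputable def Ggrp (p : ℕ) [Fact p.Prime] : Subgroup (GL (Fin 2) ℚ_[p]) :=
  Subgroup.closure (SLZset p ∪ {Tmat p})

/-! ### Auxiliary geometric lemmas -/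

section AuxGeom

variable (p : ℕ) [Fact p.Prime]

instance : IsUltrametricDist (Fin 2 → ℚ_[p]) := by
  constructor
  intro x y z
  rw [dist_pi_le_iff (le_max_iff.2 (Or.inl dist_nonneg))]
  intro i
  exact le_trans (IsUltrametricDist.dist_triangle_max (x i) (y i) (z i))
    (max_le_max (dist_le_pi_dist x y i) (dist_le_pi_dist y z i))

lemma ppow_pos (m : ℤ) : (0 : ℝ) < (p : ℝ) ^ m :=
  zpow_pos (by exact_mod_cast (Fact.out (p := p.Prime)).pos) m

lemma mem_cball_iff (c w : Fin 2 → ℚ_[p]) (m : ℤ) :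
    w ∈ Metric.closedBall c ((p : ℝ) ^ (-m)) ↔ ∀ i, ‖w i - c i‖ ≤ (p : ℝ) ^ (-m) := by
  rw [Metric.mem_closedBall, dist_pi_le_iff (le_of_lt (ppow_pos p _))]
  simp [dist_eq_norm]

lemma ballV_eq (v : Fin 2 → ℚ_[p]) (n : ℕ) :
    ballV p v n = Metric.closedBall v ((p : ℝ) ^ (-(n : ℤ))) := by
  ext w; rw [mem_cball_iff]; rfl

lemma cball_compactOpen (c : Fin 2 → ℚ_[p]) (m : ℤ) (hc : (p : ℝ) ^ (-m) < max ‖c 0‖ ‖c 1‖) :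
    IsCompactOpenV p (Metric.closedBall c ((p : ℝ) ^ (-m))) := by
  refine ⟨isCompact_closedBall _ _,
    IsUltrametricDist.isOpen_closedBall _ (ne_of_gt (ppow_pos p _)), ?_⟩
  intro w hw
  rw [mem_cball_iff] at hw
  rcases max_cases ‖c 0‖ ‖c 1‖ with ⟨h, _⟩ | ⟨h, _⟩ <;> rw [h] at hc
  · intro h0
    have := hw 0
    rw [h0] at this
    simp only [Pi.zero_apply, zero_sub, norm_neg] at this
    exact absurd this (not_le.2 hc)
  · intro h0
    have := hw 1
    rw [h0] at this
    simp only [Pi.zero_apply, zero_sub, norm_neg] at this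
    exact absurd this (not_le.2 hc)

lemma ballV_compactOpen (v : Fin 2 → ℚ_[p]) (n : ℕ) (hn : 1 ≤ n) (hv : IsPrimitiveVec p v) :
    IsCompactOpenV p (ballV p v n) := by
  rw [ballV_eq]
  apply cball_compactOpen
  have hp1 : (1 : ℝ) < (p : ℝ) := by exact_mod_cast (Fact.out (p := p.Prime)).one_lt
  have h1 : (p : ℝ) ^ (-(n : ℤ)) < 1 := by
    have : (p : ℝ) ^ (-(n : ℤ)) < (p : ℝ) ^ (0 : ℤ) :=
      zpow_lt_zpow_right₀ hp1 (by omega)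
    simpa using this
  obtain ⟨i, hi⟩ := hv.2
  apply lt_of_lt_of_le h1
  fin_cases i
  · rw [← hi]; exact le_max_left _ _
  · rw [← hi]; exact le_max_right _ _

lemma continuous_vm (M : Matrix (Fin 2) (Fin 2) ℚ_[p]) :
    Continuous fun v : Fin 2 → ℚ_[p] => Matrix.vecMul v M := by
  refine continuous_pi fun i => ?_
  simp only [Matrix.vecMul, dotProduct]
  exact continuous_finset_sum _ fun j _ => (continuous_apply j).mul continuous_const

lemma vm_vm (γ : GL (Fin 2) ℚ_[p]) (v : Fin 2 → ℚ_[p]) :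
    Matrix.vecMul (Matrix.vecMul v (γ : Matrix (Fin 2) (Fin 2) ℚ_[p]))
      ((γ⁻¹ : GL (Fin 2) ℚ_[p]) : Matrix (Fin 2) (Fin 2) ℚ_[p]) = v := by
  rw [Matrix.vecMul_vecMul, ← Units.val_mul, mul_inv_cancel, Units.val_one, Matrix.vecMul_one]

lemma vm_vm' (γ : GL (Fin 2) ℚ_[p]) (v : Fin 2 → ℚ_[p]) :
    Matrix.vecMul (Matrix.vecMul v ((γ⁻¹ : GL (Fin 2) ℚ_[p]) : Matrix (Fin 2) (Fin 2) ℚ_[p]))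
      ((γ : GL (Fin 2) ℚ_[p]) : Matrix (Fin 2) (Fin 2) ℚ_[p]) = v := by
  rw [Matrix.vecMul_vecMul, ← Units.val_mul, inv_mul_cancel, Units.val_one, Matrix.vecMul_one]

lemma vmulSet_image_eq_preimage (γ : GL (Fin 2) ℚ_[p]) (U : Set (Fin 2 → ℚ_[p])) :
    vmulSet p γ U
      = (fun v => Matrix.vecMul v ((γ⁻¹ : GL (Fin 2) ℚ_[p]) : Matrix (Fin 2) (Fin 2) ℚ_[p])) ⁻¹' U := by
  ext w
  constructor
  · rintro ⟨v, hv, rfl⟩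
    show Matrix.vecMul _ _ ∈ U
    rw [vm_vm]; exact hv
  · intro hw
    exact ⟨_, hw, vm_vm' p γ w⟩

lemma vmulSet_isCO (γ : GL (Fin 2) ℚ_[p]) (U : Set (Fin 2 → ℚ_[p])) (hU : IsCompactOpenV p U) :
    IsCompactOpenV p (vmulSet p γ U) := by
  obtain ⟨hc, ho, hx⟩ := hU
  refine ⟨hc.image (continuous_vm p _), ?_, ?_⟩
  · rw [vmulSet_image_eq_preimage]
    exact ho.preimage (continuous_vm p _)
  · rintro w ⟨v, hv, rfl⟩
    intro h0
    apply hx hv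
    have := vm_vm p γ v
    simp only at h0
    rw [h0, Matrix.zero_vecMul] at this
    exact this.symm

lemma vmulSet_one (U : Set (Fin 2 → ℚ_[p])) : vmulSet p 1 U = U := by
  simp [vmulSet, Units.val_one]

lemma vmulSet_mul (g h : GL (Fin 2) ℚ_[p]) (U : Set (Fin 2 → ℚ_[p])) :
    vmulSet p (g * h) U = vmulSet p h (vmulSet p g U) := by
  simp only [vmulSet, Set.image_image, Units.val_mul, Matrix.vecMul_vecMul]

lemma vmulSet_union (g : GL (Fin 2) ℚ_[p]) (U V : Set (Fin 2 → ℚ_[p])) :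
    vmulSet p g (U ∪ V) = vmulSet p g U ∪ vmulSet p g V :=
  Set.image_union _ _ _

lemma vmulSet_empty (g : GL (Fin 2) ℚ_[p]) : vmulSet p g (∅ : Set (Fin 2 → ℚ_[p])) = ∅ :=
  Set.image_empty _

lemma vmulSet_disjoint (g : GL (Fin 2) ℚ_[p]) (U V : Set (Fin 2 → ℚ_[p])) (h : Disjoint U V) :
    Disjoint (vmulSet p g U) (vmulSet p g V) := by
  rw [Set.disjoint_left] at h ⊢
  rintro w ⟨v, hv, rfl⟩ ⟨v', hv', he⟩
  have : v' = v := by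
    have := congrArg
      (fun u => Matrix.vecMul u ((g⁻¹ : GL (Fin 2) ℚ_[p]) : Matrix (Fin 2) (Fin 2) ℚ_[p])) he
    simpa only [vm_vm] using this
  exact h hv (this ▸ hv')

/-- `c·U` for a scalar `c`. -/
def scV (c : ℚ_[p]) (U : Set (Fin 2 → ℚ_[p])) : Set (Fin 2 → ℚ_[p]) := (fun v => c • v) '' U

lemma scV_isCO (c : ℚ_[p]) (hc : c ≠ 0) (U : Set (Fin 2 → ℚ_[p])) (hU : IsCompactOpenV p U) :
    IsCompactOpenV p (scV p c U) := by
  obtain ⟨hcc, ho, hx⟩ := hU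
  have hcont : ∀ d : ℚ_[p], Continuous fun v : Fin 2 → ℚ_[p] => d • v := fun d =>
    continuous_const_smul d
  have hpre : scV p c U = (fun v : Fin 2 → ℚ_[p] => c⁻¹ • v) ⁻¹' U := by
    ext w
    constructor
    · rintro ⟨v, hv, rfl⟩
      show c⁻¹ • c • v ∈ U
      rw [smul_smul, inv_mul_cancel₀ hc, one_smul]; exact hv
    · intro hw
      exact ⟨c⁻¹ • w, hw, by
        show c • c⁻¹ • w = w
        rw [smul_smul, mul_inv_cancel₀ hc, one_smul]⟩
  refine ⟨hcc.image (hcont c), hpre ▸ ho.preimage (hcont c⁻¹), ?_⟩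
  rintro w ⟨v, hv, rfl⟩ h0
  exact hx hv (by simpa [smul_eq_zero, hc] using h0)

lemma scV_vmulSet (c : ℚ_[p]) (g : GL (Fin 2) ℚ_[p]) (U : Set (Fin 2 → ℚ_[p])) :
    vmulSet p g (scV p c U) = scV p c (vmulSet p g U) := by
  simp only [vmulSet, scV, Set.image_image, Matrix.smul_vecMul]

lemma scV_scV (c d : ℚ_[p]) (U : Set (Fin 2 → ℚ_[p])) :
    scV p c (scV p d U) = scV p (c * d) U := by
  simp only [scV, Set.image_image, smul_smul]

lemma scV_one (U : Set (Fin 2 → ℚ_[p])) : scV p 1 U = U := by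
  simp [scV]

lemma pScaleV_eq_scV (U : Set (Fin 2 → ℚ_[p])) : pScaleV p U = scV p (p : ℚ_[p]) U := rfl

lemma norm_eq_of_sub_lt {a b : ℚ_[p]} (h : ‖a - b‖ < ‖b‖) : ‖a‖ = ‖b‖ := by
  have hne : ‖a - b‖ ≠ ‖b‖ := ne_of_lt h
  have : a = b + (a - b) := by ring
  rw [this, Padic.add_eq_max_of_ne (fun he => hne (by rw [← he])), max_eq_left (le_of_lt h)]

/-- the max-norm of a nonzero vector is a power of `p`. -/
lemma exists_j (c : Fin 2 → ℚ_[p]) (hc : c ≠ 0) :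
    ∃ j : ℤ, max ‖c 0‖ ‖c 1‖ = (p : ℝ) ^ (-j) := by
  have hp1 : (1 : ℝ) < (p : ℝ) := by exact_mod_cast (Fact.out (p := p.Prime)).one_lt
  have h0 : c 0 ≠ 0 ∨ c 1 ≠ 0 := by
    by_contra h
    push_neg at h
    exact hc (funext fun i => by fin_cases i <;> simp [h.1, h.2])
  rcases eq_or_ne (c 0) 0 with h0' | h0'
  · have h1 : c 1 ≠ 0 := h0.resolve_left (by simp [h0'])
    exact ⟨(c 1).valuation, by
      rw [h0', norm_zero, ← Padic.norm_eq_zpow_neg_valuation h1, max_eq_right (norm_nonneg _)]⟩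
  rcases eq_or_ne (c 1) 0 with h1' | h1'
  · exact ⟨(c 0).valuation, by
      rw [h1', norm_zero, ← Padic.norm_eq_zpow_neg_valuation h0', max_eq_left (norm_nonneg _)]⟩
  · refine ⟨min (c 0).valuation (c 1).valuation, ?_⟩
    rw [Padic.norm_eq_zpow_neg_valuation h0', Padic.norm_eq_zpow_neg_valuation h1']
    rcases min_cases (c 0).valuation (c 1).valuation with ⟨he, hle⟩ | ⟨he, hle⟩ <;> rw [he]
    · exact max_eq_left (zpow_le_zpow_right₀ (le_of_lt hp1) (by omega))
    · exact max_eq_right (zpow_le_zpow_right₀ (le_of_lt hp1) (by omega))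

lemma cball_eq_scaled_ballV (c : Fin 2 → ℚ_[p]) (m j : ℤ)
    (hmax : max ‖c 0‖ ‖c 1‖ = (p : ℝ) ^ (-j)) (hjm : j < m) :
    ∃ (v : Fin 2 → ℚ_[p]) (n : ℕ), IsPrimitiveVec p v ∧ 1 ≤ n ∧
      Metric.closedBall c ((p : ℝ) ^ (-m)) = scV p ((p : ℚ_[p]) ^ j) (ballV p v n) := by
  have hp0 : (p : ℚ_[p]) ≠ 0 := Nat.cast_ne_zero.mpr (Fact.out (p := p.Prime)).ne_zero
  have hpR0 : (p : ℝ) ≠ 0 := by exact_mod_cast (Fact.out (p := p.Prime)).ne_zero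
  set v : Fin 2 → ℚ_[p] := fun i => (p : ℚ_[p]) ^ (-j) * c i with hv
  set n : ℕ := (m - j).toNat with hn
  have hnz : (n : ℤ) = m - j := Int.toNat_of_nonneg (by omega)
  have hnormj : ∀ x : ℚ_[p], ‖(p : ℚ_[p]) ^ (-j) * x‖ = (p : ℝ) ^ j * ‖x‖ := by
    intro x
    rw [norm_mul, Padic.norm_p_zpow, neg_neg]
  refine ⟨v, n, ⟨?_, ?_⟩, by omega, ?_⟩
  · intro i
    rw [hv, hnormj]
    have hci : ‖c i‖ ≤ (p : ℝ) ^ (-j) := by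
      rw [← hmax]; fin_cases i
      exacts [le_max_left _ _, le_max_right _ _]
    calc (p : ℝ) ^ j * ‖c i‖ ≤ (p : ℝ) ^ j * (p : ℝ) ^ (-j) :=
          mul_le_mul_of_nonneg_left hci (le_of_lt (ppow_pos p _))
      _ = 1 := by rw [← zpow_add₀ hpR0]; ring_nf; simp
  · rcases max_cases ‖c 0‖ ‖c 1‖ with ⟨he, _⟩ | ⟨he, _⟩
    · exact ⟨0, by rw [hv, hnormj, ← he, hmax, ← zpow_add₀ hpR0]; simp⟩
    · exact ⟨1, by rw [hv, hnormj, ← he, hmax, ← zpow_add₀ hpR0]; simp⟩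
  · ext w
    rw [mem_cball_iff]
    constructor
    · intro hw
      refine ⟨(p : ℚ_[p]) ^ (-j) • w, fun i => ?_, ?_⟩
      · show ‖(p : ℚ_[p]) ^ (-j) * w i - v i‖ ≤ _
        rw [hv]
        rw [show (p : ℚ_[p]) ^ (-j) * w i - (p : ℚ_[p]) ^ (-j) * c i
            = (p : ℚ_[p]) ^ (-j) * (w i - c i) by ring, hnormj, hnz]
        calc (p : ℝ) ^ j * ‖w i - c i‖ ≤ (p : ℝ) ^ j * (p : ℝ) ^ (-m) :=
              mul_le_mul_of_nonneg_left (hw i) (le_of_lt (ppow_pos p _))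
          _ = (p : ℝ) ^ (-(m - j)) := by
              rw [← zpow_add₀ hpR0]; ring_nf
      · show (p : ℚ_[p]) ^ j • (p : ℚ_[p]) ^ (-j) • w = w
        rw [smul_smul, ← zpow_add₀ hp0]
        simp
    · rintro ⟨u, hu, rfl⟩ i
      show ‖(p : ℚ_[p]) ^ j * u i - c i‖ ≤ _
      have := hu i
      rw [hnz] at this
      have hci : c i = (p : ℚ_[p]) ^ j * v i := by
        rw [hv, ← mul_assoc, ← zpow_add₀ hp0]; simp
      rw [hci, show (p : ℚ_[p]) ^ j * u i - (p : ℚ_[p]) ^ j * v i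
          = (p : ℚ_[p]) ^ j * (u i - v i) by ring, norm_mul, Padic.norm_p_zpow]
      calc (p : ℝ) ^ (-j) * ‖u i - v i‖ ≤ (p : ℝ) ^ (-j) * (p : ℝ) ^ (-(m - j)) :=
            mul_le_mul_of_nonneg_left this (le_of_lt (ppow_pos p _))
        _ = (p : ℝ) ^ (-m) := by rw [← zpow_add₀ hpR0]; ring_nf

lemma maxnorm_pos (w : Fin 2 → ℚ_[p]) (hw : w ≠ 0) : 0 < max ‖w 0‖ ‖w 1‖ := by
  rcases eq_or_ne (w 0) 0 with h0 | h0
  · have h1 : w 1 ≠ 0 := fun h1 => hw (funext fun i => by fin_cases i <;> simp [h0, h1])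
    exact lt_max_of_lt_right (norm_pos_iff.2 h1)
  · exact lt_max_of_lt_left (norm_pos_iff.2 h0)

lemma exists_small_m (δ : ℝ) (hδ : 0 < δ) : ∃ m : ℤ, (p : ℝ) ^ (-m) < δ := by
  have hp1 : (1 : ℝ) < (p : ℝ) := by exact_mod_cast (Fact.out (p := p.Prime)).one_lt
  obtain ⟨k, hk⟩ := exists_pow_lt_of_lt_one hδ (by
    rw [inv_lt_one_iff₀]; right; exact hp1 : (p : ℝ)⁻¹ < 1)
  refine ⟨k, ?_⟩
  rwa [_root_.zpow_neg, zpow_natCast, ← inv_pow]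

/-- uniform radius lemma -/
lemma exists_uniform (U : Set (Fin 2 → ℚ_[p])) (hU : IsCompactOpenV p U) :
    ∃ m : ℤ, ∀ w ∈ U, Metric.closedBall w ((p : ℝ) ^ (-m)) ⊆ U ∧
      (p : ℝ) ^ (-m) < max ‖w 0‖ ‖w 1‖ := by
  classical
  obtain ⟨hcomp, hopen, hXv⟩ := hU
  have hex : ∀ w ∈ U, ∃ mw : ℤ, Metric.closedBall w ((p : ℝ) ^ (-mw)) ⊆ U ∧
      (p : ℝ) ^ (-mw) < max ‖w 0‖ ‖w 1‖ := by
    intro w hw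
    obtain ⟨ε, hε, hball⟩ := Metric.isOpen_iff.1 hopen w hw
    obtain ⟨mw, hmw⟩ := exists_small_m p (min ε (max ‖w 0‖ ‖w 1‖))
      (lt_min hε (maxnorm_pos p w (hXv hw)))
    refine ⟨mw, ?_, lt_of_lt_of_le hmw (min_le_right _ _)⟩
    intro x hx
    exact hball (lt_of_le_of_lt (Metric.mem_closedBall.1 hx)
      (lt_of_lt_of_le hmw (min_le_left _ _)))
  choose! mfun hmf1 hmf2 using hex
  have hcover : U ⊆ ⋃ w ∈ U, Metric.closedBall w ((p : ℝ) ^ (-(mfun w))) := by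
    intro w hw
    exact Set.mem_biUnion hw (Metric.mem_closedBall_self (le_of_lt (ppow_pos p _)))
  obtain ⟨t, htU, htfin, htcov⟩ := hcomp.elim_finite_subcover_image
    (fun w _ => IsUltrametricDist.isOpen_closedBall _ (ne_of_gt (ppow_pos p _))) hcover
  set s : Finset ℤ := insert 0 (htfin.toFinset.image mfun) with hs
  have hsne : s.Nonempty := ⟨0, Finset.mem_insert_self _ _⟩
  refine ⟨s.max' hsne, ?_⟩
  intro w hw
  obtain ⟨wi, hwi, hwmem⟩ := Set.mem_iUnion₂.1 (htcov hw)
  have hwiU : wi ∈ U := htU hwi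
  have hle : mfun wi ≤ s.max' hsne := by
    apply Finset.le_max'
    exact Finset.mem_insert_of_mem (Finset.mem_image_of_mem mfun (htfin.mem_toFinset.2 hwi))
  have hrle : (p : ℝ) ^ (-(s.max' hsne)) ≤ (p : ℝ) ^ (-(mfun wi)) :=
    zpow_le_zpow_right₀ (le_of_lt (by exact_mod_cast (Fact.out (p := p.Prime)).one_lt)) (by omega)
  constructor
  · intro x hx
    apply hmf1 wi hwiU
    have heq := IsUltrametricDist.closedBall_eq_of_mem hwmem
    rw [heq]
    exact Metric.closedBall_subset_closedBall hrle hx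
  · have hco := (mem_cball_iff p wi w (mfun wi)).1 hwmem
    rcases max_cases ‖wi 0‖ ‖wi 1‖ with ⟨he, _⟩ | ⟨he, _⟩
    · have h0 : ‖w 0‖ = ‖wi 0‖ := norm_eq_of_sub_lt p
        (lt_of_le_of_lt (hco 0) (he ▸ hmf2 wi hwiU))
      calc (p : ℝ) ^ (-(s.max' hsne)) ≤ (p : ℝ) ^ (-(mfun wi)) := hrle
        _ < max ‖wi 0‖ ‖wi 1‖ := hmf2 wi hwiU
        _ = ‖w 0‖ := by rw [he, ← h0]
        _ ≤ max ‖w 0‖ ‖w 1‖ := le_max_left _ _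
    · have h1 : ‖w 1‖ = ‖wi 1‖ := norm_eq_of_sub_lt p
        (lt_of_le_of_lt (hco 1) (he ▸ hmf2 wi hwiU))
      calc (p : ℝ) ^ (-(s.max' hsne)) ≤ (p : ℝ) ^ (-(mfun wi)) := hrle
        _ < max ‖wi 0‖ ‖wi 1‖ := hmf2 wi hwiU
        _ = ‖w 1‖ := by rw [he, ← h1]
        _ ≤ max ‖w 0‖ ‖w 1‖ := le_max_right _ _

/-- decomposition into finitely many pairwise disjoint equal-radius balls -/
lemma decomp (U : Set (Fin 2 → ℚ_[p])) (hU : IsCompactOpenV p U) :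
    ∃ (F : Finset (Set (Fin 2 → ℚ_[p]))) (m : ℤ),
      (∀ B ∈ F, ∃ c : Fin 2 → ℚ_[p], (p : ℝ) ^ (-m) < max ‖c 0‖ ‖c 1‖ ∧
        B = Metric.closedBall c ((p : ℝ) ^ (-m))) ∧
      ((F : Set (Set (Fin 2 → ℚ_[p]))).Pairwise Disjoint) ∧ ⋃₀ ↑F = U := by
  classical
  obtain ⟨m, hm⟩ := exists_uniform p U hU
  have hcover : U ⊆ ⋃ w ∈ U, Metric.closedBall w ((p : ℝ) ^ (-m)) := fun w hw =>
    Set.mem_biUnion hw (Metric.mem_closedBall_self (le_of_lt (ppow_pos p _)))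
  obtain ⟨t, htU, htfin, htcov⟩ := hU.1.elim_finite_subcover_image
    (fun w _ => IsUltrametricDist.isOpen_closedBall _ (ne_of_gt (ppow_pos p _))) hcover
  refine ⟨htfin.toFinset.image (fun w => Metric.closedBall w ((p : ℝ) ^ (-m))), m, ?_, ?_, ?_⟩
  · intro B hB
    obtain ⟨w, hw, rfl⟩ := Finset.mem_image.1 hB
    exact ⟨w, (hm w (htU (htfin.mem_toFinset.1 hw))).2, rfl⟩
  · intro B₁ h₁ B₂ h₂ hne
    rw [Finset.coe_image] at h₁ h₂
    obtain ⟨w₁, _, rfl⟩ := h₁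
    obtain ⟨w₂, _, rfl⟩ := h₂
    rcases IsUltrametricDist.closedBall_eq_or_disjoint w₁ w₂ ((p : ℝ) ^ (-m)) with he | hd
    · exact absurd he hne
    · exact hd
  · rw [Finset.coe_image, Set.sUnion_image]
    apply Set.Subset.antisymm
    · intro x hx
      obtain ⟨w, hw, hxw⟩ := Set.mem_iUnion₂.1 hx
      exact (hm w (htU (htfin.mem_toFinset.1 hw))).1 hxw
    · intro x hx
      obtain ⟨w, hw, hxw⟩ := Set.mem_iUnion₂.1 (htcov hx)
      exact Set.mem_iUnion₂.2 ⟨w, htfin.mem_toFinset.2 hw, hxw⟩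

lemma isCO_union (U V : Set (Fin 2 → ℚ_[p])) (hU : IsCompactOpenV p U)
    (hV : IsCompactOpenV p V) : IsCompactOpenV p (U ∪ V) :=
  ⟨hU.1.union hV.1, hU.2.1.union hV.2.1, Set.union_subset hU.2.2 hV.2.2⟩

lemma isCO_empty : IsCompactOpenV p (∅ : Set (Fin 2 → ℚ_[p])) :=
  ⟨isCompact_empty, isOpen_empty, Set.empty_subset _⟩

end AuxGeom

/-- Let `A` carry a right action of `G` by additive automorphisms, and let `μ` be a
`p`-invariant `A`-valued distribution on `X`. If `μ` is equivariant for `SL₂(ℤ)` on all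
compact opens of `X`, and equivariant for `T` on all balls `v + pⁿℤ_p²` with `n ≥ 1` and
`v` primitive, then `μ(U·γ) = μ(U)·γ` for every compact open `U ⊆ X` and every `γ ∈ G`. -/
theorem stmt8 (p : ℕ) [Fact p.Prime] {A : Type*} [AddCommGroup A]
    (act : Ggrp p → A → A)
    (hact_one : ∀ a, act 1 a = a)
    (hact_mul : ∀ g h a, act (g * h) a = act h (act g a))
    (hact_add : ∀ g a b, act g (a + b) = act g a + act g b)
    (μ : Set (Fin 2 → ℚ_[p]) → A)
    (hdist : ∀ U V, IsCompactOpenV p U → IsCompactOpenV p V → Disjoint U V →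
      μ (U ∪ V) = μ U + μ V)
    (hinv : ∀ U, IsCompactOpenV p U → μ (pScaleV p U) = μ U)
    (hSL : ∀ U, IsCompactOpenV p U → ∀ γ : Ggrp p, (γ : GL (Fin 2) ℚ_[p]) ∈ SLZset p →
      μ (vmulSet p (γ : GL (Fin 2) ℚ_[p]) U) = act γ (μ U))
    (hT : ∀ γ : Ggrp p, (γ : GL (Fin 2) ℚ_[p]) = Tmat p →
      ∀ (v : Fin 2 → ℚ_[p]) (n : ℕ), 1 ≤ n → IsPrimitiveVec p v →
        μ (vmulSet p (γ : GL (Fin 2) ℚ_[p]) (ballV p v n)) = act γ (μ (ballV p v n))) :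
    ∀ U, IsCompactOpenV p U → ∀ γ : Ggrp p,
      μ (vmulSet p (γ : GL (Fin 2) ℚ_[p]) U) = act γ (μ U) := by
  classical
  have hp0 : (p : ℚ_[p]) ≠ 0 := Nat.cast_ne_zero.mpr (Fact.out (p := p.Prime)).ne_zero
  have hμ0 : μ ∅ = 0 := by
    have := hdist ∅ ∅ (isCO_empty p) (isCO_empty p) (disjoint_bot_left)
    simp only [Set.union_empty] at this
    exact (left_eq_add.1 this)
  have hact0 : ∀ g : Ggrp p, act g 0 = 0 := by
    intro g
    have := hact_add g 0 0
    simp only [add_zero] at this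
    exact (left_eq_add.1 this)
  -- z-power invariance of μ under scaling by powers of p
  have hinvZ : ∀ (j : ℤ) (U : Set (Fin 2 → ℚ_[p])), IsCompactOpenV p U →
      μ (scV p ((p : ℚ_[p]) ^ j) U) = μ U := by
    intro j
    induction j using Int.induction_on with
    | zero => intro U _; rw [zpow_zero, scV_one]
    | succ k ih =>
        intro U hU
        have h1 : scV p ((p : ℚ_[p]) ^ ((k : ℤ) + 1)) U
            = scV p (p : ℚ_[p]) (scV p ((p : ℚ_[p]) ^ (k : ℤ)) U) := by
          rw [scV_scV, ← zpow_one_add₀ hp0]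
          ring_nf
        rw [h1, ← pScaleV_eq_scV,
          hinv _ (scV_isCO p _ (zpow_ne_zero _ hp0) U hU), ih U hU]
    | pred k ih =>
        intro U hU
        have h1 : scV p (p : ℚ_[p]) (scV p ((p : ℚ_[p]) ^ (-(k : ℤ) - 1)) U)
            = scV p ((p : ℚ_[p]) ^ (-(k : ℤ))) U := by
          rw [scV_scV, ← zpow_one_add₀ hp0]
          ring_nf
        have h2 := hinv _ (scV_isCO p _ (zpow_ne_zero _ hp0) U hU :
          IsCompactOpenV p (scV p ((p : ℚ_[p]) ^ (-(k : ℤ) - 1)) U))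
        rw [← pScaleV_eq_scV] at h1
        rw [h1] at h2
        rw [← h2, ih U hU]
  -- T-equivariance on all compact opens
  have hTco : ∀ γ : Ggrp p, (γ : GL (Fin 2) ℚ_[p]) = Tmat p →
      ∀ U, IsCompactOpenV p U →
        μ (vmulSet p (γ : GL (Fin 2) ℚ_[p]) U) = act γ (μ U) := by
    intro γ hγ U hU
    obtain ⟨F, m, hFball, hFdisj, hFU⟩ := decomp p U hU
    have hball : ∀ B ∈ F, IsCompactOpenV p B ∧
        μ (vmulSet p (γ : GL (Fin 2) ℚ_[p]) B) = act γ (μ B) := by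
      intro B hB
      obtain ⟨c, hclt, rfl⟩ := hFball B hB
      have hc0 : c ≠ 0 := by
        intro h
        subst h
        simp only [Pi.zero_apply, norm_zero, max_self] at hclt
        exact absurd hclt (not_lt.2 (le_of_lt (ppow_pos p _)))
      obtain ⟨j, hj⟩ := exists_j p c hc0
      have hjm : j < m := by
        by_contra hle
        push_neg at hle
        have : (p : ℝ) ^ (-j) ≤ (p : ℝ) ^ (-m) :=
          zpow_le_zpow_right₀
            (le_of_lt (by exact_mod_cast (Fact.out (p := p.Prime)).one_lt)) (by omega)
        rw [hj] at hclt
        exact absurd (lt_of_lt_of_le hclt this) (lt_irrefl _)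
      obtain ⟨v, n, hprim, hn1, hBeq⟩ := cball_eq_scaled_ballV p c m j hj hjm
      have hballco := ballV_compactOpen p v n hn1 hprim
      have hvmco := vmulSet_isCO p (γ : GL (Fin 2) ℚ_[p]) _ hballco
      refine ⟨cball_compactOpen p c m hclt, ?_⟩
      rw [hBeq, scV_vmulSet, hinvZ j _ hvmco, hinvZ j _ hballco]
      exact hT γ hγ v n hn1 hprim
    suffices claim : ∀ G : Finset (Set (Fin 2 → ℚ_[p])),
        (∀ B ∈ G, IsCompactOpenV p B ∧
          μ (vmulSet p (γ : GL (Fin 2) ℚ_[p]) B) = act γ (μ B)) →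
        ((G : Set (Set (Fin 2 → ℚ_[p]))).Pairwise Disjoint) →
        IsCompactOpenV p (⋃₀ ↑G) ∧
          μ (vmulSet p (γ : GL (Fin 2) ℚ_[p]) (⋃₀ ↑G)) = act γ (μ (⋃₀ ↑G)) by
      rw [← hFU]
      exact (claim F hball hFdisj).2
    intro G
    induction G using Finset.induction_on with
    | empty =>
        intro _ _
        simp only [Finset.coe_empty, Set.sUnion_empty]
        refine ⟨isCO_empty p, ?_⟩
        rw [vmulSet_empty, hμ0, hact0]
    | insert B G hBnotin ih =>
        intro hgood hdisj
        have hBG : (insert B G : Finset (Set (Fin 2 → ℚ_[p]))) = insert B G := rfl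
        have hcoe : ((insert B G : Finset (Set (Fin 2 → ℚ_[p]))) :
            Set (Set (Fin 2 → ℚ_[p]))) = insert B ↑G := by
          simp
        have hsub : ∀ C ∈ G, IsCompactOpenV p C ∧
            μ (vmulSet p (γ : GL (Fin 2) ℚ_[p]) C) = act γ (μ C) := fun C hC =>
          hgood C (Finset.mem_insert_of_mem hC)
        have hsubdisj : ((G : Set (Set (Fin 2 → ℚ_[p]))).Pairwise Disjoint) := by
          apply Set.Pairwise.mono _ hdisj
          rw [hcoe]
          exact Set.subset_insert _ _
        obtain ⟨ihco, ihμ⟩ := ih hsub hsubdisj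
        have hBgood := hgood B (Finset.mem_insert_self _ _)
        have hdisjBG : Disjoint B (⋃₀ ↑G) := by
          rw [Set.disjoint_sUnion_right]
          intro C hC
          refine hdisj ?_ ?_ ?_
          · rw [hcoe]; exact Set.mem_insert _ _
          · rw [hcoe]; exact Set.mem_insert_of_mem _ hC
          · intro h
            exact hBnotin (h ▸ hC)
        have hun : ⋃₀ ((insert B G : Finset (Set (Fin 2 → ℚ_[p]))) :
            Set (Set (Fin 2 → ℚ_[p]))) = B ∪ ⋃₀ ↑G := by
          rw [hcoe, Set.sUnion_insert]
        rw [hun]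
        refine ⟨isCO_union p _ _ hBgood.1 ihco, ?_⟩
        rw [vmulSet_union, hdist _ _ (vmulSet_isCO p _ _ hBgood.1) (vmulSet_isCO p _ _ ihco)
          (vmulSet_disjoint p _ _ _ hdisjBG),
          hdist _ _ hBgood.1 ihco hdisjBG, hact_add, hBgood.2, ihμ]
  -- main closure induction
  intro U hU γ
  obtain ⟨g, hg⟩ := γ
  revert U
  show ∀ U, IsCompactOpenV p U →
    μ (vmulSet p ((⟨g, hg⟩ : Ggrp p) : GL (Fin 2) ℚ_[p]) U) = act ⟨g, hg⟩ (μ U)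
  refine Subgroup.closure_induction
    (p := fun x hx => ∀ U, IsCompactOpenV p U →
      μ (vmulSet p x U) = act ⟨x, hx⟩ (μ U)) ?_ ?_ ?_ ?_ hg
  · -- generators
    intro x hx U hU
    rcases hx with hx | hx
    · exact hSL U hU ⟨x, Subgroup.subset_closure (Or.inl hx)⟩ hx
    · rw [Set.mem_singleton_iff] at hx
      exact hTco ⟨x, Subgroup.subset_closure (Or.inr (Set.mem_singleton_iff.2 hx))⟩ hx U hU
  · -- one
    intro U hU
    rw [vmulSet_one]
    exact (by
      rw [show (⟨1, Subgroup.one_mem (Ggrp p)⟩ : Ggrp p) = 1 from Subtype.ext rfl, hact_one] :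
      act ⟨1, Subgroup.one_mem (Ggrp p)⟩ (μ U) = μ U).symm
  · -- mul
    intro x y hx hy px py U hU
    have hxy : (⟨x * y, mul_mem hx hy⟩ : Ggrp p) = ⟨x, hx⟩ * ⟨y, hy⟩ := Subtype.ext rfl
    rw [vmulSet_mul, py _ (vmulSet_isCO p x U hU), px U hU, hxy, hact_mul]
  · -- inv
    intro x hx px U hU
    set V := vmulSet p x⁻¹ U with hV
    have hVco : IsCompactOpenV p V := vmulSet_isCO p _ U hU
    have hVx : vmulSet p x V = U := by
      rw [hV, ← vmulSet_mul, inv_mul_cancel, vmulSet_one]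
    have h1 := px V hVco
    rw [hVx] at h1
    have h2 : act ⟨x⁻¹, inv_mem hx⟩ (μ U) = act ⟨x⁻¹, inv_mem hx⟩ (act ⟨x, hx⟩ (μ V)) := by
      rw [h1]
    rw [h2, ← hact_mul]
    have h3 : (⟨x, hx⟩ : Ggrp p) * ⟨x⁻¹, inv_mem hx⟩ = 1 := Subtype.ext (mul_inv_cancel x)
    rw [h3, hact_one]
end

section
/- Let K be a totally real number field of degree 2 over ℚ with ring of integers 𝓞, let σ be the nontrivial element of Gal(K/ℚ), let 𝔡 be the different ideal of 𝓞 over ℤ, and assume 𝔡 = δ𝓞 for some δ ∈ 𝓞. Let p be a rational prime such that p𝓞 is a prime ideal. Let ψ be a function from the nonzero ideals of 𝓞 to ℂ such that ψ(IJ) = ψ(I)ψ(J) for all nonzero ideals I, J, ψ(I)·ψ(σ(I)) = 1 for every nonzero ideal I, ψ(x𝓞) = 1 for every totally positive x ∈ 𝓞, and ψ(𝔡) = −1. Then for every ν ∈ K, ν ≠ 0, with ν totally positive and νδ ∈ 𝓞, one has Σ ψ(I) = − Σ ψ(J), where the first sum runs over the nonzero ideals I dividing the ideal (νδ)𝓞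 with p𝓞 ∤ I, and the second sum runs over the nonzero ideals J dividing the ideal (σ(ν)δ)𝓞 with p𝓞 ∤ J. -/
open NumberField
open scoped nonZeroDivisors

section AuxStmt10

variable {K : Type*} [Field K] [NumberField K]

lemma stmt10_coe_mapRingHom (σ : K ≃ₐ[ℚ] K) (x : 𝓞 K) :
    ((RingOfIntegers.mapRingHom σ x : 𝓞 K) : K) = σ (x : K) := rfl

lemma stmt10_differentIdeal_ne_bot : differentIdeal ℤ (𝓞 K) ≠ ⊥ := by
  intro h
  have h1 := coeIdeal_differentIdeal (A := ℤ) (K := ℚ) (B := 𝓞 K) (L := K)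
  rw [h] at h1
  simp only [FractionalIdeal.coeIdeal_bot] at h1
  have hd : FractionalIdeal.dual ℤ ℚ (1 : FractionalIdeal (𝓞 K)⁰ K) ≠ 0 :=
    FractionalIdeal.dual_ne_zero ℤ ℚ one_ne_zero
  have := mul_inv_cancel₀ hd
  rw [← h1, mul_zero] at this
  exact zero_ne_one this

end AuxStmt10

section AuxStmt10b

variable {K : Type*} [Field K] [NumberField K]

lemma stmt10_dual_eq (δ : 𝓞 K) (hδ : differentIdeal ℤ (𝓞 K) = Ideal.span {δ}) :
    FractionalIdeal.dual ℤ ℚ (1 : FractionalIdeal (𝓞 K)⁰ K)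
      = FractionalIdeal.spanSingleton (𝓞 K)⁰ ((δ : K))⁻¹ := by
  have h1 := coeIdeal_differentIdeal (A := ℤ) (K := ℚ) (B := 𝓞 K) (L := K)
  rw [hδ, FractionalIdeal.coeIdeal_span_singleton] at h1
  have h2 := congrArg (·⁻¹) h1
  simp only [inv_inv] at h2
  rw [← h2, FractionalIdeal.spanSingleton_inv]

lemma stmt10_mapRingHom_dvd (σ : K ≃ₐ[ℚ] K) (δ : 𝓞 K)
    (hδ : differentIdeal ℤ (𝓞 K) = Ideal.span {δ}) :
    RingOfIntegers.mapRingHom σ δ ∣ δ := by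
  have hδ0 : δ ≠ 0 := by
    intro h
    exact stmt10_differentIdeal_ne_bot (K := K)
      (by rw [hδ, h, Ideal.span_singleton_eq_bot])
  have hδK : (δ : K) ≠ 0 := RingOfIntegers.coe_ne_zero_iff.mpr hδ0
  have hσδK : σ (δ : K) ≠ 0 := fun h => hδK (by simpa using congrArg σ.symm h)
  have hdual := stmt10_dual_eq δ hδ
  have hmem : (σ ((δ : K)))⁻¹ ∈
      FractionalIdeal.dual ℤ ℚ (1 : FractionalIdeal (𝓞 K)⁰ K) := by
    rw [FractionalIdeal.mem_dual (one_ne_zero : (1 : FractionalIdeal (𝓞 K)⁰ K) ≠ 0)]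
    intro a ha
    obtain ⟨b, rfl⟩ := (FractionalIdeal.mem_one_iff _).mp ha
    have key : (σ ((δ : K)))⁻¹ * algebraMap (𝓞 K) K b
        = σ (((δ : K))⁻¹ * ((RingOfIntegers.mapRingHom σ.symm b : 𝓞 K) : K)) := by
      rw [map_mul, map_inv₀, stmt10_coe_mapRingHom]
      simp [RingOfIntegers.coe_eq_algebraMap]
    have hz : ((δ : K))⁻¹ * ((RingOfIntegers.mapRingHom σ.symm b : 𝓞 K) : K)
        ∈ FractionalIdeal.dual ℤ ℚ (1 : FractionalIdeal (𝓞 K)⁰ K) := by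
      rw [hdual, FractionalIdeal.mem_spanSingleton]
      exact ⟨RingOfIntegers.mapRingHom σ.symm b, by rw [Algebra.smul_def]; ring⟩
    have h3 := (FractionalIdeal.mem_dual (one_ne_zero : (1 : FractionalIdeal (𝓞 K)⁰ K) ≠ 0)).mp hz 1 (FractionalIdeal.one_mem_one _)
    rw [Algebra.traceForm_apply, mul_one] at h3
    rw [Algebra.traceForm_apply, key, Algebra.trace_eq_of_algEquiv]
    exact h3
  rw [hdual, FractionalIdeal.mem_spanSingleton] at hmem
  obtain ⟨c, hc⟩ := hmem
  rw [Algebra.smul_def] at hc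
  refine ⟨c, ?_⟩
  apply RingOfIntegers.coe_injective
  rw [map_mul]
  rw [← RingOfIntegers.coe_eq_algebraMap, ← RingOfIntegers.coe_eq_algebraMap,
    stmt10_coe_mapRingHom]
  rw [← RingOfIntegers.coe_eq_algebraMap] at hc
  field_simp at hc
  rw [mul_comm] at hc
  exact hc.symm

lemma stmt10_mapRingHom_associated (σ : K ≃ₐ[ℚ] K) (δ : 𝓞 K)
    (hδ : differentIdeal ℤ (𝓞 K) = Ideal.span {δ}) :
    Associated δ (RingOfIntegers.mapRingHom σ δ) := by
  refine associated_of_dvd_dvd ?_ (stmt10_mapRingHom_dvd σ δ hδ)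
  obtain ⟨c, hc⟩ := stmt10_mapRingHom_dvd σ.symm δ hδ
  refine ⟨RingOfIntegers.mapRingHom σ c, ?_⟩
  have h2 : RingOfIntegers.mapRingHom σ (RingOfIntegers.mapRingHom (σ.symm : K →+* K) δ) = δ := by
    apply RingOfIntegers.coe_injective
    rw [← RingOfIntegers.coe_eq_algebraMap, ← RingOfIntegers.coe_eq_algebraMap,
      stmt10_coe_mapRingHom, stmt10_coe_mapRingHom]
    simp
  have h3 := congrArg (RingOfIntegers.mapRingHom (σ : K →+* K)) hc
  rw [map_mul, h2] at h3
  exact h3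

end AuxStmt10b

/-- Let `K` be a totally real quadratic field, `σ` the nontrivial automorphism, `𝔡 = δ𝓞`
the different ideal, and `p` a rational prime inert in `K`. Let `ψ` be a multiplicative,
totally odd, unramified character of the narrow class group, viewed as a function on
ideals (so `ψ(I)ψ(σI) = 1`, `ψ((x)) = 1` for `x` totally positive, and `ψ(𝔡) = −1`).
Then for every totally positive `ν ≠ 0` with `νδ ∈ 𝓞`,
`Σ_{I ∣ (νδ), p∤I} ψ(I) = − Σ_{J ∣ (σ(ν)δ), p∤J} ψ(J)`. -/
theorem stmt10 (K : Type*) [Field K] [NumberField K]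
    (hdeg : Module.finrank ℚ K = 2)
    (htotallyreal : ∀ φ : K →+* ℂ, ∀ x : K, (φ x).im = 0)
    (σ : K ≃ₐ[ℚ] K) (hσ : σ ≠ AlgEquiv.refl)
    (δ : 𝓞 K) (hδ : differentIdeal ℤ (𝓞 K) = Ideal.span {δ})
    (p : ℕ) (hp : p.Prime) (hpinert : (Ideal.span {(p : 𝓞 K)}).IsPrime)
    (ψ : Ideal (𝓞 K) → ℂ)
    (hψmul : ∀ I J : Ideal (𝓞 K), I ≠ ⊥ → J ≠ ⊥ → ψ (I * J) = ψ I * ψ J)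
    (hψconj : ∀ I : Ideal (𝓞 K), I ≠ ⊥ →
      ψ I * ψ (Ideal.map (RingOfIntegers.mapRingHom σ) I) = 1)
    (hψprin : ∀ x : 𝓞 K, (∀ φ : K →+* ℝ, 0 < φ (x : K)) → ψ (Ideal.span {x}) = 1)
    (hψdiff : ψ (differentIdeal ℤ (𝓞 K)) = -1)
    (ν : K) (hν0 : ν ≠ 0) (hνpos : ∀ φ : K →+* ℝ, 0 < φ ν) :
    (∑ᶠ I ∈ {I : Ideal (𝓞 K) | I ≠ ⊥ ∧
        (∃ m : 𝓞 K, (m : K) = ν * (δ : K) ∧ I ∣ Ideal.span {m}) ∧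
        ¬(Ideal.span {(p : 𝓞 K)} ∣ I)}, ψ I)
      = -(∑ᶠ J ∈ {J : Ideal (𝓞 K) | J ≠ ⊥ ∧
        (∃ m : 𝓞 K, (m : K) = σ ν * (δ : K) ∧ J ∣ Ideal.span {m}) ∧
        ¬(Ideal.span {(p : 𝓞 K)} ∣ J)}, ψ J) := by
  classical
  have hδ0 : δ ≠ 0 := by
    intro h
    exact stmt10_differentIdeal_ne_bot (K := K) (by rw [hδ, h, Ideal.span_singleton_eq_bot])
  have hδK : (δ : K) ≠ 0 := RingOfIntegers.coe_ne_zero_iff.mpr hδ0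
  obtain ⟨u, hu⟩ := stmt10_mapRingHom_associated σ δ hδ
  have hδuK : (δ : K) * (((u : (𝓞 K)ˣ) : 𝓞 K) : K) = σ (δ : K) := by
    rw [← stmt10_coe_mapRingHom σ δ, ← hu]
    exact (map_mul (algebraMap (𝓞 K) K) δ ↑u).symm
  -- the conjugation maps on ideals
  have hFG : ∀ I : Ideal (𝓞 K),
      (I.map (RingOfIntegers.mapRingHom σ)).map (RingOfIntegers.mapRingHom (σ.symm : K →+* K)) = I := by
    intro I
    rw [Ideal.map_map]
    have hc : (RingOfIntegers.mapRingHom (σ.symm : K →+* K)).comp (RingOfIntegers.mapRingHom σ)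
        = RingHom.id (𝓞 K) := by
      ext x
      show ((RingOfIntegers.mapRingHom (σ.symm : K →+* K) (RingOfIntegers.mapRingHom σ x) : 𝓞 K) : K)
        = ((x : 𝓞 K) : K)
      rw [stmt10_coe_mapRingHom, stmt10_coe_mapRingHom, AlgEquiv.symm_apply_apply]
    rw [hc, Ideal.map_id]
  have hGF : ∀ I : Ideal (𝓞 K),
      (I.map (RingOfIntegers.mapRingHom (σ.symm : K →+* K))).map (RingOfIntegers.mapRingHom σ) = I := by
    intro I
    rw [Ideal.map_map]
    have hc : (RingOfIntegers.mapRingHom σ).comp (RingOfIntegers.mapRingHom (σ.symm : K →+* K))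
        = RingHom.id (𝓞 K) := by
      ext x
      show ((RingOfIntegers.mapRingHom σ (RingOfIntegers.mapRingHom (σ.symm : K →+* K) x) : 𝓞 K) : K)
        = ((x : 𝓞 K) : K)
      rw [stmt10_coe_mapRingHom, stmt10_coe_mapRingHom, AlgEquiv.apply_symm_apply]
    rw [hc, Ideal.map_id]
  have hmapdvd : ∀ (f : (𝓞 K) →+* (𝓞 K)) (I J : Ideal (𝓞 K)), I ∣ J → I.map f ∣ J.map f := by
    rintro f I J ⟨C, hC⟩
    exact ⟨C.map f, by rw [hC, Ideal.map_mul]⟩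
  -- basic facts about P
  have hpcast : ((p : 𝓞 K) : K) = (p : K) := by
    rw [RingOfIntegers.coe_eq_algebraMap, map_natCast]
  have hp0 : (p : 𝓞 K) ≠ 0 := Nat.cast_ne_zero.mpr hp.ne_zero
  have hPbot : Ideal.span {(p : 𝓞 K)} ≠ ⊥ := by
    rw [Ne, Ideal.span_singleton_eq_bot]; exact hp0
  have hPprime : Prime (Ideal.span {(p : 𝓞 K)}) := (Ideal.prime_iff_isPrime hPbot).mpr hpinert
  have hψne : ∀ I : Ideal (𝓞 K), I ≠ ⊥ → ψ I ≠ 0 :=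
    fun I hI => left_ne_zero_of_mul_eq_one (hψconj I hI)
  have hψP : ψ (Ideal.span {(p : 𝓞 K)}) = 1 := by
    apply hψprin
    intro φ
    rw [hpcast, map_natCast]
    exact_mod_cast hp.pos
  have hψPpow : ∀ n : ℕ, ψ (Ideal.span {(p : 𝓞 K)} ^ n) = 1 := by
    intro n
    induction n with
    | zero =>
      have h1 := hψprin 1 (fun φ => by simp)
      rw [Ideal.span_singleton_one] at h1
      simpa using h1
    | succ n ih =>
      rw [pow_succ, hψmul _ _ (pow_ne_zero _ hPbot) hPbot, ih, hψP, mul_one]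
  by_cases hex : ∃ m : 𝓞 K, (m : K) = ν * (δ : K)
  · obtain ⟨m, hm⟩ := hex
    have hm0 : m ≠ 0 := by
      intro h
      exact mul_ne_zero hν0 hδK (by rw [← hm, h]; simp)
    have hAbot : Ideal.span {m} ≠ ⊥ := by rw [Ne, Ideal.span_singleton_eq_bot]; exact hm0
    obtain ⟨a, A', hA'P, hAfac⟩ := WfDvdMonoid.max_power_factor hAbot hPprime.irreducible
    have hA'bot : A' ≠ ⊥ := by
      intro h
      rw [h, Ideal.mul_bot] at hAfac
      exact hAbot hAfac
    -- ψ (span m) = -1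
    obtain ⟨b, hb⟩ := IsLocalization.exists_integer_multiple (𝓞 K)⁰ ν
    obtain ⟨c, hc⟩ := hb
    have hbb0 : (b : 𝓞 K) ≠ 0 := nonZeroDivisors.coe_ne_zero b
    have hc' : (c : K) = ((b : 𝓞 K) : K) * ν := by
      rw [RingOfIntegers.coe_eq_algebraMap, hc, Algebra.smul_def]
    set bb : 𝓞 K := (b : 𝓞 K) with hbbdef
    set tb : 𝓞 K := RingOfIntegers.mapRingHom σ bb with htbdef
    have htb0 : tb ≠ 0 := by
      intro h
      have h1 : σ ((bb : 𝓞 K) : K) = 0 := by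
        rw [← stmt10_coe_mapRingHom σ bb, ← htbdef, h]; simp
      exact hbb0 (by
        apply RingOfIntegers.coe_injective
        simpa using congrArg σ.symm h1)
    set n : 𝓞 K := (bb * tb) ^ 2 with hndef
    have hn0 : n ≠ 0 := pow_ne_zero _ (mul_ne_zero hbb0 htb0)
    have hbtK : ((bb * tb : 𝓞 K) : K) ≠ 0 :=
      RingOfIntegers.coe_ne_zero_iff.mpr (mul_ne_zero hbb0 htb0)
    have hnpos : ∀ φ : K →+* ℝ, 0 < φ ((n : 𝓞 K) : K) := by
      intro φ
      have h1 : ((n : 𝓞 K) : K) = ((bb * tb : 𝓞 K) : K) ^ 2 := by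
        rw [hndef, RingOfIntegers.coe_eq_algebraMap, map_pow]
      rw [h1, map_pow]
      apply pow_two_pos_of_ne_zero
      intro h
      exact hbtK ((map_eq_zero_iff φ φ.injective).mp h)
    set m' : 𝓞 K := bb * tb * tb * c with hm'def
    have hm'K : (m' : K) = ((n : 𝓞 K) : K) * ν := by
      rw [hm'def, hndef]
      push_cast [RingOfIntegers.coe_eq_algebraMap]
      rw [← RingOfIntegers.coe_eq_algebraMap c, hc']
      push_cast [RingOfIntegers.coe_eq_algebraMap]
      ring
    have hm'0 : m' ≠ 0 := by
      intro h
      exact mul_ne_zero (RingOfIntegers.coe_ne_zero_iff.mpr hn0) hν0 (by rw [← hm'K, h]; simp)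
    have hm'pos : ∀ φ : K →+* ℝ, 0 < φ ((m' : 𝓞 K) : K) := by
      intro φ
      rw [hm'K, map_mul]
      exact mul_pos (hnpos φ) (hνpos φ)
    have hnm : n * m = m' * δ := by
      apply RingOfIntegers.coe_injective
      push_cast [RingOfIntegers.coe_eq_algebraMap]
      rw [← RingOfIntegers.coe_eq_algebraMap m, ← RingOfIntegers.coe_eq_algebraMap m',
        ← RingOfIntegers.coe_eq_algebraMap δ, hm, hm'K]
      ring
    have hψA : ψ (Ideal.span {m}) = -1 := by
      have hkey : Ideal.span {n} * Ideal.span {m} = Ideal.span {m'} * Ideal.span {δ} := by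
        rw [Ideal.span_singleton_mul_span_singleton, Ideal.span_singleton_mul_span_singleton, hnm]
      have h1 := hψmul (Ideal.span {n}) (Ideal.span {m})
        (by rw [Ne, Ideal.span_singleton_eq_bot]; exact hn0) hAbot
      have h2 := hψmul (Ideal.span {m'}) (Ideal.span {δ})
        (by rw [Ne, Ideal.span_singleton_eq_bot]; exact hm'0)
        (by rw [Ne, Ideal.span_singleton_eq_bot]; exact hδ0)
      rw [hkey, h2, hψprin m' hm'pos, ← hδ, hψdiff] at h1
      rw [hψprin n hnpos, one_mul, one_mul] at h1
      exact h1.symm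
    have hψA' : ψ A' = -1 := by
      have h1 := hψmul (Ideal.span {(p : 𝓞 K)} ^ a) A' (pow_ne_zero _ hPbot) hA'bot
      rw [← hAfac, hψA, hψPpow] at h1
      rw [one_mul] at h1
      exact h1.symm
    have hIbotOfDvd : ∀ I : Ideal (𝓞 K), I ∣ A' → I ≠ ⊥ := by
      intro I hIA' h
      rw [h, ← Ideal.zero_eq_bot, zero_dvd_iff, Ideal.zero_eq_bot] at hIA'
      exact hA'bot hIA'
    have hcop : ∀ I : Ideal (𝓞 K), ¬(Ideal.span {(p : 𝓞 K)} ∣ I) →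
        IsCoprime I (Ideal.span {(p : 𝓞 K)}) := by
      intro I hPI
      rw [Ideal.isCoprime_iff_sup_eq]
      by_contra hne
      have hmax : (Ideal.span {(p : 𝓞 K)}).IsMaximal := hpinert.isMaximal hPbot
      have hle := hmax.eq_of_le hne le_sup_right
      exact hPI (Ideal.dvd_iff_le.mpr (by rw [hle]; exact le_sup_left))
    -- the conjugate generator
    set m2 : 𝓞 K := RingOfIntegers.mapRingHom (σ : K →+* K) m * ↑u⁻¹ with hm2def
    have huuK : (((u : (𝓞 K)ˣ) : 𝓞 K) : K) * ((((u⁻¹ : (𝓞 K)ˣ) : 𝓞 K)) : K) = 1 := by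
      rw [RingOfIntegers.coe_eq_algebraMap, RingOfIntegers.coe_eq_algebraMap, ← map_mul,
        Units.mul_inv, map_one]
    have hm2K : (m2 : K) = σ ν * (δ : K) := by
      rw [hm2def, RingOfIntegers.coe_eq_algebraMap, map_mul,
        ← RingOfIntegers.coe_eq_algebraMap, ← RingOfIntegers.coe_eq_algebraMap,
        stmt10_coe_mapRingHom, hm, map_mul σ, ← hδuK]
      rw [mul_assoc, mul_assoc, huuK, mul_one]
    have hBspan : Ideal.span {m2} = (Ideal.span {m}).map (RingOfIntegers.mapRingHom σ) := by
      rw [Ideal.map_span, Set.image_singleton, Ideal.span_singleton_eq_span_singleton]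
      exact ⟨u, by rw [hm2def, Units.inv_mul_cancel_right]⟩
    have hPmap : (Ideal.span {(p : 𝓞 K)}).map (RingOfIntegers.mapRingHom σ)
        = Ideal.span {(p : 𝓞 K)} := by
      rw [Ideal.map_span, Set.image_singleton, map_natCast]
    have hPmap' : (Ideal.span {(p : 𝓞 K)}).map (RingOfIntegers.mapRingHom (σ.symm : K →+* K))
        = Ideal.span {(p : 𝓞 K)} := by
      rw [Ideal.map_span, Set.image_singleton, map_natCast]
    have hBfac : Ideal.span {m2}
        = Ideal.span {(p : 𝓞 K)} ^ a * A'.map (RingOfIntegers.mapRingHom σ) := by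
      rw [hBspan, hAfac, Ideal.map_mul, Ideal.map_pow, hPmap]
    have hB'bot : A'.map (RingOfIntegers.mapRingHom (σ : K →+* K)) ≠ ⊥ := by
      intro h
      have h2 := hFG A'
      rw [h, Ideal.map_bot] at h2
      exact hA'bot h2.symm
    have hPB' : ¬(Ideal.span {(p : 𝓞 K)} ∣ A'.map (RingOfIntegers.mapRingHom (σ : K →+* K))) := by
      intro h
      apply hA'P
      have h2 := hmapdvd (RingOfIntegers.mapRingHom (σ.symm : K →+* K)) _ _ h
      rw [hFG, hPmap'] at h2
      exact h2
    -- set descriptions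
    have hSeq : {I : Ideal (𝓞 K) | I ≠ ⊥ ∧
        (∃ mm : 𝓞 K, (mm : K) = ν * (δ : K) ∧ I ∣ Ideal.span {mm}) ∧
        ¬(Ideal.span {(p : 𝓞 K)} ∣ I)} = {I : Ideal (𝓞 K) | I ∣ A'} := by
      ext I
      simp only [Set.mem_setOf_eq]
      constructor
      · rintro ⟨hIbot, ⟨mm, hmm, hdvd⟩, hPI⟩
        have hmmm : mm = m := RingOfIntegers.coe_injective (by
          rw [← RingOfIntegers.coe_eq_algebraMap, ← RingOfIntegers.coe_eq_algebraMap, hmm, hm])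
        rw [hmmm, hAfac] at hdvd
        exact ((hcop I hPI).pow_right).dvd_of_dvd_mul_left hdvd
      · intro hIA'
        refine ⟨hIbotOfDvd I hIA', ⟨m, hm, ?_⟩, ?_⟩
        · rw [hAfac]; exact hIA'.mul_left _
        · intro hPdvd
          exact hA'P (hPdvd.trans hIA')
    have hTeq : {J : Ideal (𝓞 K) | J ≠ ⊥ ∧
        (∃ mm : 𝓞 K, (mm : K) = σ ν * (δ : K) ∧ J ∣ Ideal.span {mm}) ∧
        ¬(Ideal.span {(p : 𝓞 K)} ∣ J)}
        = {J : Ideal (𝓞 K) | J ∣ A'.map (RingOfIntegers.mapRingHom (σ : K →+* K))} := by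
      ext J
      simp only [Set.mem_setOf_eq]
      constructor
      · rintro ⟨hJbot, ⟨mm, hmm, hdvd⟩, hPJ⟩
        have hmmm : mm = m2 := RingOfIntegers.coe_injective (by
          rw [← RingOfIntegers.coe_eq_algebraMap, ← RingOfIntegers.coe_eq_algebraMap, hmm, hm2K])
        rw [hmmm, hBfac] at hdvd
        exact ((hcop J hPJ).pow_right).dvd_of_dvd_mul_left hdvd
      · intro hJB'
        have hJbot : J ≠ ⊥ := by
          intro h
          rw [h, ← Ideal.zero_eq_bot, zero_dvd_iff, Ideal.zero_eq_bot] at hJB'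
          exact hB'bot hJB'
        refine ⟨hJbot, ⟨m2, hm2K, ?_⟩, ?_⟩
        · rw [hBfac]; exact hJB'.mul_left _
        · intro hPdvd
          exact hPB' (hPdvd.trans hJB')
    -- complement machinery
    have hexC : ∀ I : Ideal (𝓞 K), I ∣ A' → ∃ C, A' = I * C := fun I h => h
    set compl : Ideal (𝓞 K) → Ideal (𝓞 K) := fun I =>
      if h : I ∣ A' then (hexC I h).choose else ⊤ with hcompldef
    have hcompl : ∀ I, I ∣ A' → I * compl I = A' := by
      intro I h
      rw [hcompldef]
      simp only [dif_pos h]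
      exact (hexC I h).choose_spec.symm
    have hcomplDvd : ∀ I, I ∣ A' → compl I ∣ A' := fun I h =>
      ⟨I, by rw [← hcompl I h]; ring⟩
    have hcomplBot : ∀ I, I ∣ A' → compl I ≠ ⊥ := by
      intro I h hbot
      apply hA'bot
      rw [← hcompl I h, hbot, Ideal.mul_bot]
    have hcomplCompl : ∀ I, I ∣ A' → compl (compl I) = I := by
      intro I h
      have h1 := hcompl I h
      have h2 := hcompl (compl I) (hcomplDvd I h)
      apply mul_left_cancel₀ (a := compl I)
        (by rw [Ne, Ideal.zero_eq_bot]; exact hcomplBot I h)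
      rw [h2, ← h1, mul_comm]
    have hψcompl : ∀ I, I ∣ A' → ψ I * ψ (compl I) = -1 := by
      intro I h
      rw [← hψmul I (compl I) (hIbotOfDvd I h) (hcomplBot I h), hcompl I h, hψA']
    -- finiteness
    have hA'0 : A' ≠ 0 := by rw [Ne, Ideal.zero_eq_bot]; exact hA'bot
    have hB'0 : A'.map (RingOfIntegers.mapRingHom (σ : K →+* K)) ≠ 0 := by
      rw [Ne, Ideal.zero_eq_bot]; exact hB'bot
    have hfinS : {I : Ideal (𝓞 K) | I ∣ A'}.Finite := by
      haveI := UniqueFactorizationMonoid.fintypeSubtypeDvd A' hA'0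
      exact Set.Finite.ofFinset
        (Finset.univ.image (fun x : {I : Ideal (𝓞 K) // I ∣ A'} => (x : Ideal (𝓞 K))))
        (by intro I; simp [Set.mem_setOf_eq, Subtype.exists])
    have hfinT : {J : Ideal (𝓞 K) | J ∣ A'.map (RingOfIntegers.mapRingHom (σ : K →+* K))}.Finite := by
      haveI := UniqueFactorizationMonoid.fintypeSubtypeDvd
        (A'.map (RingOfIntegers.mapRingHom (σ : K →+* K))) hB'0
      exact Set.Finite.ofFinset
        (Finset.univ.image
          (fun x : {I : Ideal (𝓞 K) // I ∣ A'.map (RingOfIntegers.mapRingHom (σ : K →+* K))} =>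
            (x : Ideal (𝓞 K))))
        (by intro I; simp [Set.mem_setOf_eq, Subtype.exists])
    rw [hSeq, hTeq, finsum_mem_eq_finite_toFinset_sum _ hfinS,
      finsum_mem_eq_finite_toFinset_sum _ hfinT]
    have hdvdT : ∀ J : Ideal (𝓞 K), J ∣ A'.map (RingOfIntegers.mapRingHom (σ : K →+* K)) →
        J.map (RingOfIntegers.mapRingHom (σ.symm : K →+* K)) ∣ A' := by
      intro J h
      have h2 := hmapdvd (RingOfIntegers.mapRingHom (σ.symm : K →+* K)) _ _ h
      rwa [hFG] at h2
    have main : ∑ J ∈ hfinT.toFinset, ψ J = ∑ I ∈ hfinS.toFinset, (-ψ I) := by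
      refine Finset.sum_nbij'
        (fun J => compl (J.map (RingOfIntegers.mapRingHom (σ.symm : K →+* K))))
        (fun I => (compl I).map (RingOfIntegers.mapRingHom σ)) ?_ ?_ ?_ ?_ ?_
      · intro J hJ
        rw [Set.Finite.mem_toFinset, Set.mem_setOf_eq] at hJ ⊢
        exact hcomplDvd _ (hdvdT J hJ)
      · intro I hI
        rw [Set.Finite.mem_toFinset, Set.mem_setOf_eq] at hI ⊢
        exact hmapdvd _ _ _ (hcomplDvd I hI)
      · intro J hJ
        rw [Set.Finite.mem_toFinset, Set.mem_setOf_eq] at hJ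
        rw [hcomplCompl _ (hdvdT J hJ), hGF]
      · intro I hI
        rw [Set.Finite.mem_toFinset, Set.mem_setOf_eq] at hI
        rw [hFG, hcomplCompl I hI]
      · intro J hJ
        rw [Set.Finite.mem_toFinset, Set.mem_setOf_eq] at hJ
        have hI0 : J.map (RingOfIntegers.mapRingHom (σ.symm : K →+* K)) ∣ A' := hdvdT J hJ
        have e1 : ψ (J.map (RingOfIntegers.mapRingHom (σ.symm : K →+* K))) * ψ J = 1 := by
          have := hψconj (J.map (RingOfIntegers.mapRingHom (σ.symm : K →+* K))) (hIbotOfDvd _ hI0)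
          rwa [hGF] at this
        have e2 : ψ (J.map (RingOfIntegers.mapRingHom (σ.symm : K →+* K))) *
            (-ψ (compl (J.map (RingOfIntegers.mapRingHom (σ.symm : K →+* K))))) = 1 := by
          rw [mul_neg, hψcompl _ hI0, neg_neg]
        exact mul_left_cancel₀ (hψne _ (hIbotOfDvd _ hI0)) (e1.trans e2.symm)
    rw [main, Finset.sum_neg_distrib, neg_neg]
  · have hex2 : ¬ ∃ mm : 𝓞 K, (mm : K) = σ ν * (δ : K) := by
      rintro ⟨m2, hm2⟩
      apply hex
      refine ⟨RingOfIntegers.mapRingHom (σ.symm : K →+* K) (m2 * ↑u), ?_⟩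
      rw [stmt10_coe_mapRingHom]
      have h1 : ((m2 * (u : (𝓞 K)ˣ) : 𝓞 K) : K) = σ (ν * (δ : K)) := by
        rw [RingOfIntegers.coe_eq_algebraMap, map_mul, ← RingOfIntegers.coe_eq_algebraMap,
          ← RingOfIntegers.coe_eq_algebraMap, hm2, map_mul σ, mul_assoc, hδuK]
      rw [h1]
      exact σ.symm_apply_apply _
    have hS : {I : Ideal (𝓞 K) | I ≠ ⊥ ∧
        (∃ mm : 𝓞 K, (mm : K) = ν * (δ : K) ∧ I ∣ Ideal.span {mm}) ∧
        ¬(Ideal.span {(p : 𝓞 K)} ∣ I)} = ∅ := by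
      ext I
      simp only [Set.mem_setOf_eq, Set.mem_empty_iff_false, iff_false]
      rintro ⟨-, ⟨mm, hmm, -⟩, -⟩
      exact hex ⟨mm, hmm⟩
    have hT : {J : Ideal (𝓞 K) | J ≠ ⊥ ∧
        (∃ mm : 𝓞 K, (mm : K) = σ ν * (δ : K) ∧ J ∣ Ideal.span {mm}) ∧
        ¬(Ideal.span {(p : 𝓞 K)} ∣ J)} = ∅ := by
      ext J
      simp only [Set.mem_setOf_eq, Set.mem_empty_iff_false, iff_false]
      rintro ⟨-, ⟨mm, hmm, -⟩, -⟩
      exact hex2 ⟨mm, hmm⟩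
    rw [hS, hT, finsum_mem_empty, neg_zero]
end
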